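/- arXiv:2211.13556 — 3 statements merged into one kernel-verified Lean document; each statement's English description precedes it below -/
import Mathlib

section
/- Let N ≥ 1, α ∈ (0,N), p ≥ 1, and let Iₐ(x) = A_α/|x|^{N−α} be the Riesz kernel. The map u ↦ (∫_{ℝᴺ} |I_{α/2} ∗ |u|^p|² dx)^{1/(2p)} defines a norm on the space of measurable functions u : ℝᴺ → ℝᴺ for which this quantity is finite, and this Coulomb space Q^{α,p}(ℝᴺ, ℝᴺ) is complete with respect to it. -/
open MeasureTheory ENNReal

/-- The Riesz kernel `I_γ(x) = Γ((N−γ)/2)/(Γ(γ/2) π^{N/2} 2^γ) · |x|^{−(N−γ)}` on `ℝᴺ`. -/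
noncomputable def rieszKernel (N : ℕ) (γ : ℝ) (x : EuclideanSpace ℝ (Fin N)) : ℝ :=
  (Real.Gamma (((N : ℝ) - γ) / 2) /
      (Real.Gamma (γ / 2) * Real.pi ^ ((N : ℝ) / 2) * (2 : ℝ) ^ γ)) *
    ‖x‖ ^ (-(((N : ℝ) - γ)))

/-- The Coulomb energy `∫ |I_{α/2} ∗ |u|^p|² dx` of a vector field `u : ℝᴺ → ℝᴺ`. -/
noncomputable def coulombEnergy (N : ℕ) (α p : ℝ)
    (u : EuclideanSpace ℝ (Fin N) → EuclideanSpace ℝ (Fin N)) : ℝ≥0∞ :=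
  ∫⁻ x, (∫⁻ y, ENNReal.ofReal (rieszKernel N (α / 2) (x - y)) * (‖u y‖₊ : ℝ≥0∞) ^ p) ^ 2

/-- The Coulomb norm `‖u‖_{Q^{α,p}} = (∫ |I_{α/2} ∗ |u|^p|² dx)^{1/(2p)}`. -/
noncomputable def coulombNorm (N : ℕ) (α p : ℝ)
    (u : EuclideanSpace ℝ (Fin N) → EuclideanSpace ℝ (Fin N)) : ℝ≥0∞ :=
  coulombEnergy N α p u ^ (1 / (2 * p))

namespace CoulombAux
variable (N : ℕ) (α p : ℝ)
abbrev E (N : ℕ) := EuclideanSpace ℝ (Fin N)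
noncomputable def K (z : E N) : ℝ≥0∞ := ENNReal.ofReal (rieszKernel N (α / 2) z)
noncomputable def Tk (f : E N → ℝ≥0∞) (x : E N) : ℝ≥0∞ := ∫⁻ y, K N α (x - y) * f y
noncomputable def Sk (f : E N → ℝ≥0∞) : ℝ≥0∞ := ∫⁻ x, (Tk N α f x) ^ 2

lemma measurable_K : Measurable (fun z : E N => K N α z) :=
  Measurable.ennreal_ofReal (measurable_const.mul ((measurable_norm).pow_const _))

lemma measurable_Tk {f : E N → ℝ≥0∞} (hf : Measurable f) : Measurable (Tk N α f) := by
  apply Measurable.lintegral_prod_right (f := fun x y => K N α (x - y) * f y)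
  exact ((measurable_K N α).comp (measurable_fst.sub measurable_snd)).mul (hf.comp measurable_snd)

lemma Tk_mono {f g : E N → ℝ≥0∞} (h : f ≤ᵐ[volume] g) : Tk N α f ≤ Tk N α g := by
  intro x
  refine lintegral_mono_ae ?_
  filter_upwards [h] with y hy
  exact mul_le_mul_right hy _

lemma Sk_mono {f g : E N → ℝ≥0∞} (h : f ≤ᵐ[volume] g) : Sk N α f ≤ Sk N α g :=
  lintegral_mono fun x => pow_le_pow_left' (Tk_mono N α h x) 2

lemma Sk_rpow (f : E N → ℝ≥0∞) : Sk N α f = ∫⁻ x, (Tk N α f x) ^ (2:ℝ) := by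
  unfold Sk
  congr 1; funext x
  rw [show ((2:ℝ) = ((2:ℕ):ℝ)) by norm_num, ENNReal.rpow_natCast]

/-- additivity of Tk -/
lemma Tk_add {f g : E N → ℝ≥0∞} (hf : Measurable f) :
    Tk N α (fun y => f y + g y) = fun x => Tk N α f x + Tk N α g x := by
  funext x
  unfold Tk
  simp_rw [mul_add]
  exact lintegral_add_left (((measurable_K N α).comp (measurable_const.sub measurable_id)).mul hf) _

/-- pointwise splitting `h^p = h^(p-1) f + h^(p-1) g` for `h = f + g` -/
lemma split_pow (hp : 1 ≤ p) (a b : ℝ≥0∞) :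
    (a + b) ^ p = (a + b) ^ (p - 1) * a + (a + b) ^ (p - 1) * b := by
  have h2 := ENNReal.rpow_add_of_nonneg (x := a + b) (p - 1) 1 (by linarith) one_pos.le
  rw [ENNReal.rpow_one] at h2
  rw [← mul_add]
  calc (a + b) ^ p = (a + b) ^ (p - 1 + 1) := by norm_num
    _ = (a + b) ^ (p - 1) * (a + b) := h2

/-- inner pointwise Hölder: `Tk (h^(p-1) f) ≤ (Tk h^p)^((p-1)/p) * (Tk f^p)^(1/p)` -/
lemma inner_holder (hp : 1 < p) {h f : E N → ℝ≥0∞} (hh : Measurable h) (hf : Measurable f)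
    (x : E N) :
    Tk N α (fun y => h y ^ (p - 1) * f y) x ≤
      (Tk N α (fun y => h y ^ p) x) ^ ((p - 1) / p) * (Tk N α (fun y => f y ^ p) x) ^ (1 / p) := by
  have hp0 : (0:ℝ) < p := by linarith
  have hq : Real.HolderConjugate (p / (p - 1)) p := (Real.HolderConjugate.conjExponent hp).symm
  have H := ENNReal.lintegral_mul_le_Lp_mul_Lq (volume)
      (p := p / (p - 1)) (q := p) hq
      (f := fun y => (K N α (x - y)) ^ ((p-1)/p) * h y ^ (p - 1))
      (g := fun y => (K N α (x - y)) ^ (1/p) * f y)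
      ((((measurable_K N α).comp (measurable_const.sub measurable_id)).pow_const _).mul
        (hh.pow_const _)).aemeasurable
      ((((measurable_K N α).comp (measurable_const.sub measurable_id)).pow_const _).mul
        hf).aemeasurable
  have e1 : ∀ y : E N, ((K N α (x - y)) ^ ((p-1)/p) * h y ^ (p - 1)) *
      ((K N α (x - y)) ^ (1/p) * f y) = K N α (x - y) * (h y ^ (p - 1) * f y) := by
    intro y
    have : (K N α (x - y)) ^ ((p-1)/p) * (K N α (x - y)) ^ (1/p) = K N α (x - y) := by
      rw [← ENNReal.rpow_add_of_nonneg _ _ (div_nonneg (by linarith) (by linarith)) (one_div_nonneg.mpr (by linarith))]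
      rw [show (p-1)/p + 1/p = 1 by field_simp; ring, ENNReal.rpow_one]
    calc ((K N α (x - y)) ^ ((p-1)/p) * h y ^ (p - 1)) * ((K N α (x - y)) ^ (1/p) * f y)
        = ((K N α (x - y)) ^ ((p-1)/p) * (K N α (x - y)) ^ (1/p)) * (h y ^ (p - 1) * f y) := by ring
      _ = K N α (x - y) * (h y ^ (p - 1) * f y) := by rw [this]
  have hpne : p ≠ 0 := by linarith
  have hp1ne : p - 1 ≠ 0 := by linarith
  have ea : (p-1)/p * (p/(p-1)) = 1 := by field_simp
  have eb : (p-1) * (p/(p-1)) = p := by field_simp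
  have ec : 1/p * p = 1 := by field_simp
  have e2 : ∀ y : E N, ((K N α (x - y)) ^ ((p-1)/p) * h y ^ (p - 1)) ^ (p/(p-1)) =
      K N α (x - y) * h y ^ p := by
    intro y
    rw [ENNReal.mul_rpow_of_nonneg _ _ (div_nonneg (by linarith) (by linarith)),
      ← ENNReal.rpow_mul, ← ENNReal.rpow_mul, ea, eb, ENNReal.rpow_one]
  have e3 : ∀ y : E N, ((K N α (x - y)) ^ (1/p) * f y) ^ p = K N α (x - y) * f y ^ p := by
    intro y
    rw [ENNReal.mul_rpow_of_nonneg _ _ (by linarith), ← ENNReal.rpow_mul, ec, ENNReal.rpow_one]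
  simp only [Pi.mul_apply] at H
  simp_rw [e1, e2, e3] at H
  have hinv : 1 / (p/(p-1)) = (p-1)/p := by field_simp
  rw [hinv] at H
  exact H

lemma Tk_const_mul (c : ℝ≥0∞) {f : E N → ℝ≥0∞} (hf : Measurable f) :
    Tk N α (fun y => c * f y) = fun x => c * Tk N α f x := by
  funext x
  unfold Tk
  calc ∫⁻ y, K N α (x - y) * (c * f y) = ∫⁻ y, c * (K N α (x - y) * f y) := by
        congr 1; funext y; ring
    _ = c * ∫⁻ y, K N α (x - y) * f y :=
        lintegral_const_mul c (((measurable_K N α).comp (measurable_const.sub measurable_id)).mul hf)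

lemma sup_sq_le (a b : ℝ≥0∞) : (a ⊔ b) ^ 2 ≤ a ^ 2 + b ^ 2 := by
  rcases le_total a b with h | h
  · rw [sup_eq_right.mpr h]; exact le_add_self
  · rw [sup_eq_left.mpr h]; exact le_self_add

lemma add_sq_le (a b : ℝ≥0∞) : (a + b) ^ 2 ≤ 4 * (a ^ 2 + b ^ 2) := by
  calc (a + b) ^ 2 ≤ (2 * (a ⊔ b)) ^ 2 := by
        refine pow_le_pow_left' ?_ 2
        rw [two_mul]
        exact add_le_add le_sup_left le_sup_right
    _ = 4 * (a ⊔ b) ^ 2 := by rw [mul_pow]; norm_num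
    _ ≤ 4 * (a ^ 2 + b ^ 2) := mul_le_mul_right (sup_sq_le a b) 4

lemma rpow_add_le (hp : 0 ≤ p) (a b : ℝ≥0∞) : (a + b) ^ p ≤ 2 ^ p * (a ^ p + b ^ p) := by
  calc (a + b) ^ p ≤ (2 * (a ⊔ b)) ^ p := by
        refine ENNReal.rpow_le_rpow ?_ hp
        rw [two_mul]
        exact add_le_add le_sup_left le_sup_right
    _ = 2 ^ p * (a ⊔ b) ^ p := ENNReal.mul_rpow_of_nonneg _ _ hp
    _ ≤ 2 ^ p * (a ^ p + b ^ p) := by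
        refine mul_le_mul_right ?_ _
        rcases le_total a b with h | h
        · rw [sup_eq_right.mpr h]; exact le_add_self
        · rw [sup_eq_left.mpr h]; exact le_self_add

lemma Sk_add_ne_top (hp : 1 ≤ p) {f g : E N → ℝ≥0∞} (hf : Measurable f) (hg : Measurable g)
    (hF : Sk N α (fun y => f y ^ p) ≠ ∞) (hG : Sk N α (fun y => g y ^ p) ≠ ∞) :
    Sk N α (fun y => (f y + g y) ^ p) ≠ ∞ := by
  have hp0 : (0:ℝ) ≤ p := by linarith
  have hmF : Measurable fun y => f y ^ p := hf.pow_const p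
  have hmG : Measurable fun y => g y ^ p := hg.pow_const p
  have step1 : Sk N α (fun y => (f y + g y) ^ p) ≤
      Sk N α (fun y => (2:ℝ≥0∞) ^ p * (f y ^ p + g y ^ p)) :=
    Sk_mono N α (Filter.Eventually.of_forall fun y => rpow_add_le p hp0 _ _)
  have step2 : Sk N α (fun y => (2:ℝ≥0∞) ^ p * (f y ^ p + g y ^ p)) ≤
      ((2:ℝ≥0∞) ^ p) ^ 2 * 4 * (Sk N α (fun y => f y ^ p) + Sk N α (fun y => g y ^ p)) := by
    unfold Sk
    rw [Tk_const_mul N α _ (f := fun y => f y ^ p + g y ^ p) (hmF.add hmG)]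
    have hadd := Tk_add N α (g := fun y => g y ^ p) hmF
    calc ∫⁻ x, ((2:ℝ≥0∞) ^ p * Tk N α (fun y => f y ^ p + g y ^ p) x) ^ 2
        = ∫⁻ x, ((2:ℝ≥0∞) ^ p) ^ 2 *
            (Tk N α (fun y => f y ^ p) x + Tk N α (fun y => g y ^ p) x) ^ 2 := by
          congr 1; funext x; rw [hadd, mul_pow]
      _ ≤ ∫⁻ x, ((2:ℝ≥0∞) ^ p) ^ 2 *
            (4 * ((Tk N α (fun y => f y ^ p) x) ^ 2 + (Tk N α (fun y => g y ^ p) x) ^ 2)) := by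
          refine lintegral_mono fun x => mul_le_mul_right (add_sq_le _ _) _
      _ = ((2:ℝ≥0∞) ^ p) ^ 2 * 4 *
            (Sk N α (fun y => f y ^ p) + Sk N α (fun y => g y ^ p)) := by
          unfold Sk
          rw [← lintegral_add_left (((measurable_Tk N α hmF).pow_const 2)) ]
          rw [← lintegral_const_mul _ (f := fun x => (Tk N α (fun y => f y ^ p) x) ^ 2 + (Tk N α (fun y => g y ^ p) x) ^ 2) (((measurable_Tk N α hmF).pow_const 2).add
            ((measurable_Tk N α hmG).pow_const 2))]
          exact lintegral_congr fun x => by ring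
  refine ne_top_of_le_ne_top ?_ (step1.trans step2)
  exact ENNReal.mul_ne_top
    (ENNReal.mul_ne_top (pow_ne_top (ENNReal.rpow_ne_top_of_nonneg hp0 ENNReal.ofNat_ne_top))
      (by norm_num))
    (ENNReal.add_ne_top.mpr ⟨hF, hG⟩)

lemma cross (hp : 1 ≤ p) {h f : E N → ℝ≥0∞} (hh : Measurable h) (hf : Measurable f) :
    ∫⁻ x, Tk N α (fun y => h y ^ p) x * Tk N α (fun y => h y ^ (p - 1) * f y) x ≤
      (Sk N α (fun y => h y ^ p)) ^ ((2*p-1)/(2*p)) * (Sk N α (fun y => f y ^ p)) ^ (1/(2*p)) := by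
  have hp0 : (0:ℝ) < p := by linarith
  set A := Tk N α (fun y => h y ^ p) with hA
  set B := Tk N α (fun y => f y ^ p) with hB
  have hmA : Measurable A := measurable_Tk N α (hh.pow_const p)
  have hmB : Measurable B := measurable_Tk N α (hf.pow_const p)
  have pointwise : ∀ x, A x * Tk N α (fun y => h y ^ (p - 1) * f y) x ≤
      A x ^ ((2*p-1)/p) * B x ^ (1/p) := by
    intro x
    rcases eq_or_lt_of_le hp with hp1 | hp1
    · have e : (fun y => h y ^ (p - 1) * f y) = fun y => f y ^ p := by
        funext y
        rw [← hp1]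
        norm_num
      have eA : A x ^ ((2*p-1)/p) = A x := by rw [← hp1]; norm_num
      have eB : B x ^ (1/p) = B x := by rw [← hp1]; norm_num
      rw [e, eA, eB]
    · calc A x * Tk N α (fun y => h y ^ (p - 1) * f y) x
          ≤ A x * (A x ^ ((p-1)/p) * B x ^ (1/p)) :=
            mul_le_mul_right (inner_holder N α p hp1 hh hf x) _
        _ = (A x * A x ^ ((p-1)/p)) * B x ^ (1/p) := by rw [mul_assoc]
        _ = A x ^ ((2*p-1)/p) * B x ^ (1/p) := by
            congr 1
            have hpne : p ≠ 0 := by linarith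
            have e : A x ^ (1:ℝ) * A x ^ ((p-1)/p) = A x ^ ((2*p-1)/p) := by
              rw [← ENNReal.rpow_add_of_nonneg _ _ one_pos.le
                (div_nonneg (by linarith) (by linarith))]
              congr 1
              field_simp
              ring
            rw [ENNReal.rpow_one] at e
            exact e
  have h2p : (1:ℝ) < 2*p := by linarith
  have hpne : p ≠ 0 := by linarith
  have h2pne : 2*p - 1 ≠ 0 := by linarith
  have hq2 : ((2*p)/(2*p-1)).HolderConjugate (2*p) :=
    (Real.HolderConjugate.conjExponent h2p).symm
  have H := ENNReal.lintegral_mul_le_Lp_mul_Lq volume hq2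
      (f := fun x => A x ^ ((2*p-1)/p)) (g := fun x => B x ^ (1/p))
      (hmA.pow_const _).aemeasurable (hmB.pow_const _).aemeasurable
  have e1 : ∀ x, (A x ^ ((2*p-1)/p)) ^ ((2*p)/(2*p-1)) = A x ^ (2:ℝ) := by
    intro x
    rw [← ENNReal.rpow_mul]
    congr 1
    field_simp
  have e2 : ∀ x, (B x ^ (1/p)) ^ (2*p) = B x ^ (2:ℝ) := by
    intro x
    rw [← ENNReal.rpow_mul]
    congr 1
    field_simp
  have e3 : (1:ℝ)/((2*p)/(2*p-1)) = (2*p-1)/(2*p) := by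
    field_simp
  simp only [Pi.mul_apply] at H
  simp_rw [e1, e2, e3] at H
  rw [Sk_rpow, Sk_rpow]
  exact le_trans (lintegral_mono pointwise) H

lemma Sk_triangle (hp : 1 ≤ p) {f g : E N → ℝ≥0∞} (hf : Measurable f) (hg : Measurable g) :
    Sk N α (fun y => (f y + g y) ^ p) ^ (1/(2*p)) ≤
      Sk N α (fun y => f y ^ p) ^ (1/(2*p)) + Sk N α (fun y => g y ^ p) ^ (1/(2*p)) := by
  have hp0 : (0:ℝ) < p := by linarith
  have hexp : (0:ℝ) < 1/(2*p) := by positivity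
  by_cases hF : Sk N α (fun y => f y ^ p) = ∞
  · rw [hF, ENNReal.top_rpow_of_pos hexp]
    exact le_trans le_top (le_add_right le_rfl)
  by_cases hG : Sk N α (fun y => g y ^ p) = ∞
  · rw [hG, ENNReal.top_rpow_of_pos hexp]
    exact le_trans le_top (le_add_left le_rfl)
  set S := Sk N α (fun y => (f y + g y) ^ p) with hS
  have hStop : S ≠ ∞ := Sk_add_ne_top N α p hp hf hg hF hG
  by_cases hS0 : S = 0
  · rw [hS0, ENNReal.zero_rpow_of_pos hexp]
    exact zero_le
  -- main chain
  have hmh : Measurable fun y => f y + g y := hf.add hg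
  have key : S ≤ S ^ ((2*p-1)/(2*p)) *
      (Sk N α (fun y => f y ^ p) ^ (1/(2*p)) + Sk N α (fun y => g y ^ p) ^ (1/(2*p))) := by
    have hsplit : (fun y => (f y + g y) ^ p) =
        fun y => (f y + g y) ^ (p - 1) * f y + (f y + g y) ^ (p - 1) * g y := by
      funext y
      exact split_pow p hp (f y) (g y)
    have hTadd : Tk N α (fun y => (f y + g y) ^ p) = fun x =>
        Tk N α (fun y => (f y + g y) ^ (p - 1) * f y) x +
        Tk N α (fun y => (f y + g y) ^ (p - 1) * g y) x := by
      rw [hsplit]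
      exact Tk_add N α ((hmh.pow_const _).mul hf)
    have hmA : Measurable (Tk N α (fun y => (f y + g y) ^ p)) :=
      measurable_Tk N α (hmh.pow_const p)
    have hS' : S = ∫⁻ x, (Tk N α (fun y => (f y + g y) ^ p) x) ^ 2 := rfl
    calc S = ∫⁻ x, Tk N α (fun y => (f y + g y) ^ p) x *
          (Tk N α (fun y => (f y + g y) ^ (p - 1) * f y) x +
           Tk N α (fun y => (f y + g y) ^ (p - 1) * g y) x) := by
          rw [hS']
          refine lintegral_congr fun x => ?_
          rw [pow_two]
          congr 1
          rw [hTadd]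
      _ = (∫⁻ x, Tk N α (fun y => (f y + g y) ^ p) x *
          Tk N α (fun y => (f y + g y) ^ (p - 1) * f y) x) +
          ∫⁻ x, Tk N α (fun y => (f y + g y) ^ p) x *
          Tk N α (fun y => (f y + g y) ^ (p - 1) * g y) x := by
          simp_rw [mul_add]
          exact lintegral_add_left (hmA.mul (measurable_Tk N α ((hmh.pow_const _).mul hf))) _
      _ ≤ S ^ ((2*p-1)/(2*p)) * Sk N α (fun y => f y ^ p) ^ (1/(2*p)) +
          S ^ ((2*p-1)/(2*p)) * Sk N α (fun y => g y ^ p) ^ (1/(2*p)) :=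
          add_le_add (cross N α p hp hmh hf) (cross N α p hp hmh hg)
      _ = S ^ ((2*p-1)/(2*p)) *
          (Sk N α (fun y => f y ^ p) ^ (1/(2*p)) + Sk N α (fun y => g y ^ p) ^ (1/(2*p))) := by
          rw [mul_add]
  have hSd : S = S ^ ((2*p-1)/(2*p)) * S ^ (1/(2*p)) := by
    rw [← ENNReal.rpow_add _ _ hS0 hStop,
      show (2*p-1)/(2*p) + 1/(2*p) = 1 by field_simp; ring, ENNReal.rpow_one]
  have hcancel0 : S ^ ((2*p-1)/(2*p)) ≠ 0 := by
    simp only [ne_eq, ENNReal.rpow_eq_zero_iff, not_or]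
    exact ⟨fun hh => hS0 hh.1, fun hh => hStop hh.1⟩
  have hcanceltop : S ^ ((2*p-1)/(2*p)) ≠ ∞ := by
    simp only [ne_eq, ENNReal.rpow_eq_top_iff, not_or]
    exact ⟨fun hh => hS0 hh.1, fun hh => hStop hh.1⟩
  have key2 : S ^ ((2*p-1)/(2*p)) * S ^ (1/(2*p)) ≤ S ^ ((2*p-1)/(2*p)) *
      (Sk N α (fun y => f y ^ p) ^ (1/(2*p)) + Sk N α (fun y => g y ^ p) ^ (1/(2*p))) := by
    rw [← hSd]
    exact key
  exact (ENNReal.mul_le_mul_iff_right hcancel0 hcanceltop).mp key2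

-- ### kernel positivity and lower bounds

lemma riesz_const_pos (hα : 0 < α) (hαN : α < N) :
    0 < Real.Gamma (((N : ℝ) - α/2) / 2) /
      (Real.Gamma ((α/2) / 2) * Real.pi ^ ((N : ℝ) / 2) * (2 : ℝ) ^ (α/2)) := by
  apply div_pos
  · exact Real.Gamma_pos_of_pos (by linarith)
  · have h1 : 0 < Real.Gamma ((α/2)/2) := Real.Gamma_pos_of_pos (by linarith)
    have h2 : (0:ℝ) < Real.pi ^ ((N:ℝ)/2) := Real.rpow_pos_of_pos Real.pi_pos _
    have h3 : (0:ℝ) < (2:ℝ) ^ (α/2) := Real.rpow_pos_of_pos (by norm_num) _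
    positivity

lemma rieszKernel_pos (hα : 0 < α) (hαN : α < N) {z : E N} (hz : z ≠ 0) :
    0 < rieszKernel N (α/2) z := by
  unfold rieszKernel
  exact mul_pos (riesz_const_pos N α hα hαN)
    (Real.rpow_pos_of_pos (norm_pos_iff.mpr hz) _)

lemma K_pos (hα : 0 < α) (hαN : α < N) {z : E N} (hz : z ≠ 0) : 0 < K N α z :=
  ENNReal.ofReal_pos.mpr (rieszKernel_pos N α hα hαN hz)

lemma K_lower (hα : 0 < α) (hαN : α < N) (R : ℝ) (hR : 0 < R) :
    ∃ c : ℝ≥0∞, c ≠ 0 ∧ c ≠ ∞ ∧ ∀ z : E N, z ≠ 0 → ‖z‖ ≤ R → c ≤ K N α z := by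
  set C₀ := Real.Gamma (((N : ℝ) - α/2) / 2) /
      (Real.Gamma ((α/2) / 2) * Real.pi ^ ((N : ℝ) / 2) * (2 : ℝ) ^ (α/2)) with hC₀
  have hC₀pos : 0 < C₀ := riesz_const_pos N α hα hαN
  have hNα : (0:ℝ) < (N:ℝ) - α/2 := by linarith
  refine ⟨ENNReal.ofReal (C₀ * R ^ (-(((N:ℝ) - α/2)))), ?_, ENNReal.ofReal_ne_top, ?_⟩
  · exact (ENNReal.ofReal_pos.mpr (mul_pos hC₀pos (Real.rpow_pos_of_pos hR _))).ne'
  · intro z hz hzR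
    apply ENNReal.ofReal_le_ofReal
    unfold rieszKernel
    rw [← hC₀]
    refine mul_le_mul_of_nonneg_left ?_ hC₀pos.le
    exact Real.rpow_le_rpow_of_nonpos (norm_pos_iff.mpr hz) hzR (by linarith)

lemma exists_localC (hN : 1 ≤ N) (hα : 0 < α) (hαN : α < N) (R : ℝ) (hR : 0 < R) :
    ∃ C : ℝ≥0∞, C ≠ ∞ ∧ ∀ f : E N → ℝ≥0∞, Measurable f →
      ∫⁻ y in Metric.ball (0 : E N) R, f y ≤ C * (Sk N α f) ^ ((1:ℝ)/2) := by
  haveI : Nonempty (Fin N) := ⟨⟨0, hN⟩⟩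
  haveI : Nontrivial (E N) := inferInstance
  obtain ⟨c, hc0, hctop, hc⟩ := K_lower N α hα hαN (2*R) (by linarith)
  set V := volume (Metric.ball (0 : E N) R) with hV
  have hV0 : V ≠ 0 := (Metric.measure_ball_pos volume 0 hR).ne'
  have hVtop : V ≠ ∞ := (measure_ball_lt_top).ne
  refine ⟨c⁻¹ * (V ^ ((1:ℝ)/2))⁻¹, ?_, ?_⟩
  · exact ENNReal.mul_ne_top (ENNReal.inv_ne_top.mpr hc0)
      (ENNReal.inv_ne_top.mpr (by
        simp only [ne_eq, ENNReal.rpow_eq_zero_iff, not_or]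
        exact ⟨fun h => hV0 h.1, fun h => hVtop h.1⟩))
  intro f hf
  set J := ∫⁻ y in Metric.ball (0 : E N) R, f y with hJ
  have key : ∀ x ∈ Metric.ball (0 : E N) R, c * J ≤ Tk N α f x := by
    intro x hx
    have h1 : c * J = ∫⁻ y in Metric.ball (0 : E N) R, c * f y :=
      (lintegral_const_mul c hf).symm
    rw [h1]
    have h2 : ∫⁻ y in Metric.ball (0 : E N) R, c * f y ≤
        ∫⁻ y in Metric.ball (0 : E N) R, K N α (x - y) * f y := by
      refine lintegral_mono_ae ?_
      have hsing : (volume.restrict (Metric.ball (0 : E N) R)) {x} = 0 :=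
        le_antisymm (le_trans (Measure.restrict_apply_le _ _) (le_of_eq (measure_singleton x)))
          (zero_le)
      filter_upwards [ae_restrict_mem measurableSet_ball,
        (measure_eq_zero_iff_ae_notMem.mp hsing)] with y hy hyx
      refine mul_le_mul_left ?_ _
      refine hc _ (sub_ne_zero.mpr (fun h => hyx (by simp [h.symm]))) ?_
      rw [← dist_eq_norm]
      have ht := dist_triangle x (0 : E N) y
      rw [Metric.mem_ball] at hx hy
      rw [dist_comm (0 : E N) y] at ht
      linarith
    exact h2.trans (setLIntegral_le_lintegral _ _)
  have key2 : (c * J) ^ 2 * V ≤ Sk N α f := by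
    calc (c * J) ^ 2 * V = ∫⁻ _ in Metric.ball (0 : E N) R, (c * J)^2 := by
          rw [setLIntegral_const]
      _ ≤ ∫⁻ x in Metric.ball (0 : E N) R, (Tk N α f x) ^ 2 := by
          refine setLIntegral_mono ((measurable_Tk N α hf).pow_const 2) ?_
          exact fun x hx => pow_le_pow_left' (key x hx) 2
      _ ≤ Sk N α f := setLIntegral_le_lintegral _ _
  -- now extract J
  have h3 : (c * J) ^ 2 ≤ Sk N α f / V :=
    (ENNReal.le_div_iff_mul_le (Or.inl hV0) (Or.inl hVtop)).mpr key2
  have h4 : c * J ≤ (Sk N α f / V) ^ ((1:ℝ)/2) := by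
    have : c * J = ((c * J) ^ 2) ^ ((1:ℝ)/2) := by
      rw [← ENNReal.rpow_natCast _ 2, ← ENNReal.rpow_mul]
      norm_num
    rw [this]
    exact ENNReal.rpow_le_rpow h3 (by norm_num)
  have h5 : J ≤ c⁻¹ * (Sk N α f / V) ^ ((1:ℝ)/2) := by
    have := mul_le_mul_right h4 c⁻¹
    rwa [← mul_assoc, ENNReal.inv_mul_cancel hc0 hctop, one_mul] at this
  calc J ≤ c⁻¹ * (Sk N α f / V) ^ ((1:ℝ)/2) := h5
    _ = c⁻¹ * ((V ^ ((1:ℝ)/2))⁻¹ * Sk N α f ^ ((1:ℝ)/2)) := by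
        rw [ENNReal.div_rpow_of_nonneg _ _ (by norm_num), div_eq_mul_inv, mul_comm (Sk N α f ^ ((1:ℝ)/2))]
    _ = c⁻¹ * (V ^ ((1:ℝ)/2))⁻¹ * Sk N α f ^ ((1:ℝ)/2) := by rw [mul_assoc]

lemma energy_eq (u : E N → E N) :
    coulombEnergy N α p u = Sk N α (fun y => (‖u y‖₊ : ℝ≥0∞) ^ p) := rfl

lemma energy_congr {u v : E N → E N} (h : u =ᵐ[volume] v) :
    coulombEnergy N α p u = coulombEnergy N α p v := by
  rw [energy_eq, energy_eq]
  unfold Sk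
  congr 1
  funext x
  congr 1
  refine lintegral_congr_ae ?_
  filter_upwards [h] with y hy
  rw [hy]

lemma norm_congr {u v : E N → E N} (h : u =ᵐ[volume] v) :
    coulombNorm N α p u = coulombNorm N α p v := by
  unfold coulombNorm; rw [energy_congr N α p h]

lemma energy_congr_nnnorm {u v : E N → E N} (h : ∀ y, ‖u y‖₊ = ‖v y‖₊) :
    coulombEnergy N α p u = coulombEnergy N α p v := by
  unfold coulombEnergy
  refine lintegral_congr fun x => ?_
  congr 1
  refine lintegral_congr fun y => ?_
  rw [h y]

lemma energy_neg_sub (u v : E N → E N) :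
    coulombEnergy N α p (u - v) = coulombEnergy N α p (v - u) := by
  refine energy_congr_nnnorm N α p fun y => ?_
  simp only [Pi.sub_apply]
  rw [← neg_sub, nnnorm_neg]

lemma norm_neg_sub (u v : E N → E N) :
    coulombNorm N α p (u - v) = coulombNorm N α p (v - u) := by
  unfold coulombNorm; rw [energy_neg_sub]

/-- homogeneity -/
lemma norm_smul (hp : 1 ≤ p) (c : ℝ) (u : E N → E N) :
    coulombNorm N α p (c • u) = ENNReal.ofReal |c| * coulombNorm N α p u := by
  have hp0 : (0:ℝ) < p := by linarith
  set c' : ℝ≥0∞ := (‖c‖₊ : ℝ≥0∞) with hc'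
  have hc'top : c' ≠ ∞ := ENNReal.coe_ne_top
  have hcp : c' ^ p ≠ ∞ := ENNReal.rpow_ne_top_of_nonneg hp0.le hc'top
  have e1 : coulombEnergy N α p (c • u) = (c' ^ p) ^ 2 * coulombEnergy N α p u := by
    unfold coulombEnergy
    have inner : ∀ x, (∫⁻ y, ENNReal.ofReal (rieszKernel N (α / 2) (x - y)) *
        (‖(c • u) y‖₊ : ℝ≥0∞) ^ p) = c' ^ p *
        ∫⁻ y, ENNReal.ofReal (rieszKernel N (α / 2) (x - y)) * (‖u y‖₊ : ℝ≥0∞) ^ p := by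
      intro x
      rw [← lintegral_const_mul' _ _ hcp]
      refine lintegral_congr fun y => ?_
      have : ((‖(c • u) y‖₊ : ℝ≥0∞)) ^ p = c' ^ p * (‖u y‖₊ : ℝ≥0∞) ^ p := by
        rw [← ENNReal.mul_rpow_of_nonneg _ _ hp0.le]
        congr 1
        simp only [Pi.smul_apply, nnnorm_smul]
        rw [ENNReal.coe_mul]
      rw [this]
      ring
    calc ∫⁻ x, (∫⁻ y, ENNReal.ofReal (rieszKernel N (α / 2) (x - y)) *
          (‖(c • u) y‖₊ : ℝ≥0∞) ^ p) ^ 2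
        = ∫⁻ x, (c' ^ p) ^ 2 * (∫⁻ y, ENNReal.ofReal (rieszKernel N (α / 2) (x - y)) *
          (‖u y‖₊ : ℝ≥0∞) ^ p) ^ 2 := by
          refine lintegral_congr fun x => ?_
          rw [inner x, mul_pow]
      _ = (c' ^ p) ^ 2 * ∫⁻ x, (∫⁻ y, ENNReal.ofReal (rieszKernel N (α / 2) (x - y)) *
          (‖u y‖₊ : ℝ≥0∞) ^ p) ^ 2 :=
          lintegral_const_mul' _ _ (pow_ne_top hcp)
  unfold coulombNorm
  rw [e1, ENNReal.mul_rpow_of_nonneg _ _ (by positivity)]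
  congr 1
  · rw [← ENNReal.rpow_natCast (c' ^ p) 2, ← ENNReal.rpow_mul, ← ENNReal.rpow_mul,
      show p * ((2:ℕ) * (1/(2*p))) = 1 by
        push_cast
        rw [← mul_assoc, mul_comm p 2, mul_one_div, div_self (ne_of_gt (by positivity))],
      ENNReal.rpow_one, hc', ← Real.norm_eq_abs, ofReal_norm, enorm_eq_nnnorm]

lemma norm_eq_zero_iff (hN : 1 ≤ N) (hα : 0 < α) (hαN : α < N) (hp : 1 ≤ p)
    {u : E N → E N} (hu : Measurable u) :
    coulombNorm N α p u = 0 ↔ u =ᵐ[volume] 0 := by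
  haveI : Nonempty (Fin N) := ⟨⟨0, hN⟩⟩
  haveI : Nontrivial (E N) := inferInstance
  have hp0 : (0:ℝ) < p := by linarith
  have hexp : (0:ℝ) < 1/(2*p) := by positivity
  have hmf : Measurable fun y => (‖u y‖₊ : ℝ≥0∞) ^ p := hu.enorm.pow_const p
  constructor
  · intro h
    have hE : coulombEnergy N α p u = 0 := by
      rcases ENNReal.rpow_eq_zero_iff.mp h with ⟨h1, _⟩ | ⟨_, h2⟩
      · exact h1
      · linarith
    rw [energy_eq] at hE
    unfold Sk at hE
    have hTk := (lintegral_eq_zero_iff ((measurable_Tk N α hmf).pow_const 2)).mp hE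
    have hvol : (volume : Measure (E N)) ≠ 0 := by
      intro h0
      have := Metric.measure_ball_pos (volume : Measure (E N)) (0 : E N) one_pos
      rw [h0] at this
      simp at this
    haveI : (ae (volume : Measure (E N))).NeBot := ae_neBot.mpr hvol
    obtain ⟨x₀, hx₀⟩ := hTk.exists
    simp only [Pi.zero_apply] at hx₀
    have hT0 : Tk N α (fun y => (‖u y‖₊ : ℝ≥0∞) ^ p) x₀ = 0 :=
      pow_eq_zero_iff (two_ne_zero) |>.mp hx₀
    unfold Tk at hT0
    have hae := (lintegral_eq_zero_iff
        (((measurable_K N α).comp (measurable_const.sub measurable_id)).mul hmf)).mp hT0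
    have hsing : (volume : Measure (E N)) {x₀} = 0 := measure_singleton x₀
    filter_upwards [hae, measure_eq_zero_iff_ae_notMem.mp hsing] with y hy hyx
    have hK : K N α (x₀ - y) ≠ 0 :=
      (K_pos N α hα hαN (sub_ne_zero.mpr (fun h => hyx (by simp [h.symm])))).ne'
    have : (‖u y‖₊ : ℝ≥0∞) ^ p = 0 := by
      rcases mul_eq_zero.mp hy with h | h
      · exact absurd h hK
      · exact h
    rcases ENNReal.rpow_eq_zero_iff.mp this with ⟨h1, _⟩ | ⟨h2, _⟩
    · simpa using ENNReal.coe_eq_zero.mp h1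
    · exact absurd h2 ENNReal.coe_ne_top
  · intro h
    have hE : coulombEnergy N α p u = 0 := by
      rw [energy_eq]
      unfold Sk Tk
      have : ∀ x, (∫⁻ y, K N α (x - y) * (‖u y‖₊ : ℝ≥0∞) ^ p) = 0 := by
        intro x
        rw [lintegral_eq_zero_iff (f := fun y => K N α (x - y) * (‖u y‖₊ : ℝ≥0∞) ^ p)
          (((measurable_K N α).comp (measurable_const.sub measurable_id)).mul hmf)]
        filter_upwards [h] with y hy
        simp only [Pi.zero_apply]
        simp [hy, ENNReal.zero_rpow_of_pos hp0]
      simp_rw [this]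
      simp
    unfold coulombNorm
    rw [hE]
    exact ENNReal.zero_rpow_of_pos hexp

open Filter in
lemma energy_le_liminf (hp : 1 ≤ p) {w : E N → E N} {z : ℕ → E N → E N}
    (hz : ∀ k, Measurable (z k))
    (htend : ∀ᵐ y, Tendsto (fun k => z k y) atTop (nhds (w y))) :
    coulombEnergy N α p w ≤ liminf (fun k => coulombEnergy N α p (z k)) atTop := by
  have hp0 : (0:ℝ) < p := by linarith
  set f : ℕ → E N → ℝ≥0∞ := fun k y => (‖z k y‖₊ : ℝ≥0∞) ^ p with hf
  set fw : E N → ℝ≥0∞ := fun y => (‖w y‖₊ : ℝ≥0∞) ^ p with hfw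
  have hmf : ∀ k, Measurable (f k) := fun k => (hz k).enorm.pow_const p
  have hcont : Continuous (fun a : E N => ((‖a‖₊ : ℝ≥0∞)) ^ p) :=
    ENNReal.continuous_rpow_const.comp (ENNReal.continuous_coe.comp continuous_nnnorm)
  have step1 : ∀ x, Tk N α fw x ≤ liminf (fun k => Tk N α (f k) x) atTop := by
    intro x
    have hptw : ∀ᵐ y, K N α (x - y) * fw y =
        liminf (fun k => K N α (x - y) * f k y) atTop := by
      filter_upwards [htend] with y hy
      have h1 : Tendsto (fun k => f k y) atTop (nhds (fw y)) :=
        (hcont.tendsto (w y)).comp hy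
      have h2 : Tendsto (fun k => K N α (x - y) * f k y) atTop
          (nhds (K N α (x - y) * fw y)) :=
        ENNReal.Tendsto.const_mul h1 (Or.inr ENNReal.ofReal_ne_top)
      exact h2.liminf_eq.symm
    calc Tk N α fw x = ∫⁻ y, liminf (fun k => K N α (x - y) * f k y) atTop :=
          lintegral_congr_ae hptw
      _ ≤ liminf (fun k => ∫⁻ y, K N α (x - y) * f k y) atTop :=
          lintegral_liminf_le fun k =>
            ((measurable_K N α).comp (measurable_const.sub measurable_id)).mul (hmf k)
      _ = liminf (fun k => Tk N α (f k) x) atTop := rfl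
  have step2 : ∀ x, (Tk N α fw x) ^ 2 ≤ liminf (fun k => (Tk N α (f k) x) ^ 2) atTop := by
    intro x
    have hmono : Monotone (fun a : ℝ≥0∞ => a ^ 2) := fun a b h => pow_le_pow_left' h 2
    have := hmono.map_liminf_of_continuousAt (F := atTop) (fun k => Tk N α (f k) x)
      ((ENNReal.continuous_pow 2).continuousAt)
    calc (Tk N α fw x) ^ 2 ≤ (liminf (fun k => Tk N α (f k) x) atTop) ^ 2 :=
          pow_le_pow_left' (step1 x) 2
      _ = liminf (fun k => (Tk N α (f k) x) ^ 2) atTop := this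
  calc coulombEnergy N α p w = ∫⁻ x, (Tk N α fw x) ^ 2 := rfl
    _ ≤ ∫⁻ x, liminf (fun k => (Tk N α (f k) x) ^ 2) atTop := lintegral_mono step2
    _ ≤ liminf (fun k => ∫⁻ x, (Tk N α (f k) x) ^ 2) atTop :=
        lintegral_liminf_le fun k => (measurable_Tk N α (hmf k)).pow_const 2
    _ = liminf (fun k => coulombEnergy N α p (z k)) atTop := rfl

open Filter in
lemma ae_eventually_small (hN : 1 ≤ N) (hα : 0 < α) (hαN : α < N) (hp : 1 ≤ p)
    {d : ℕ → E N → E N} (hdm : ∀ k, Measurable (d k))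
    (hdE : ∀ k, coulombEnergy N α p (d k) ≤ (((2:ℝ≥0∞))⁻¹ ^ k) ^ ((2*p : ℝ))) :
    ∀ᵐ y, ∀ᶠ k in atTop, ‖d k y‖ ≤ (((2:ℝ)⁻¹) ^ ((1:ℝ)/2)) ^ k := by
  have hp0 : (0:ℝ) < p := by linarith
  set r : ℝ≥0∞ := (2:ℝ≥0∞)⁻¹ with hr
  have hr0 : r ≠ 0 := by simp [hr]
  have hrtop : r ≠ ∞ := by simp [hr]
  have hr1 : r < 1 := by
    rw [hr]
    exact ENNReal.inv_lt_one.mpr one_lt_two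
  set t : ℕ → ℝ≥0∞ := fun k => r ^ ((k:ℝ)/2) with ht
  have ht0 : ∀ k, t k ≠ 0 := fun k => by
    simp only [ht, ne_eq, ENNReal.rpow_eq_zero_iff, not_or]
    exact ⟨fun h => hr0 h.1, fun h => hrtop h.1⟩
  have httop : ∀ k, t k ≠ ∞ := fun k => by
    simp only [ht, ne_eq, ENNReal.rpow_eq_top_iff, not_or]
    exact ⟨fun h => hr0 h.1, fun h => hrtop h.1⟩
  set q : ℝ≥0∞ := r ^ ((1:ℝ)/2) with hq
  have hq1 : q < 1 := ENNReal.rpow_lt_one hr1 (by norm_num)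
  -- per-ball Borel–Cantelli
  have hBC : ∀ j : ℕ, ∀ᵐ y, y ∈ Metric.ball (0:E N) ((j:ℝ)+1) →
      ∀ᶠ k in atTop, (‖d k y‖₊ : ℝ≥0∞) < t k := by
    intro j
    obtain ⟨C, hCtop, hC⟩ := exists_localC N α hN hα hαN ((j:ℝ)+1) (by positivity)
    set μ := volume.restrict (Metric.ball (0:E N) ((j:ℝ)+1)) with hμ
    set s : ℕ → Set (E N) := fun k => {y | t k ≤ (‖d k y‖₊ : ℝ≥0∞)} with hs
    have hmeasbound : ∀ k, μ (s k) ≤ C * q ^ k := by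
      intro k
      have hsub : s k ⊆ {y | (t k) ^ p ≤ ((‖d k y‖₊ : ℝ≥0∞)) ^ p} :=
        fun y hy => ENNReal.rpow_le_rpow hy hp0.le
      have hcheb : μ {y | (t k) ^ p ≤ ((‖d k y‖₊ : ℝ≥0∞)) ^ p} ≤
          (∫⁻ y, ((‖d k y‖₊ : ℝ≥0∞)) ^ p ∂μ) / (t k) ^ p :=
        meas_ge_le_lintegral_div ((hdm k).enorm.pow_const p).aemeasurable
          (by simp only [ne_eq, ENNReal.rpow_eq_zero_iff, not_or]
              exact ⟨fun h => (ht0 k) h.1, fun h => (httop k) h.1⟩)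
          (by simp only [ne_eq, ENNReal.rpow_eq_top_iff, not_or]
              exact ⟨fun h => (ht0 k) h.1, fun h => (httop k) h.1⟩)
      have hint : (∫⁻ y, ((‖d k y‖₊ : ℝ≥0∞)) ^ p ∂μ) ≤ C * (r ^ ((k:ℝ)*p)) := by
        have h1 := hC (fun y => ((‖d k y‖₊ : ℝ≥0∞)) ^ p) ((hdm k).enorm.pow_const p)
        have h2 : (Sk N α fun y => ((‖d k y‖₊ : ℝ≥0∞)) ^ p) ^ ((1:ℝ)/2) ≤ r ^ ((k:ℝ)*p) := by
          have h3 : (Sk N α fun y => ((‖d k y‖₊ : ℝ≥0∞)) ^ p) ≤ (r ^ k) ^ ((2*p:ℝ)) := hdE k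
          calc (Sk N α fun y => ((‖d k y‖₊ : ℝ≥0∞)) ^ p) ^ ((1:ℝ)/2)
              ≤ ((r ^ k) ^ ((2*p:ℝ))) ^ ((1:ℝ)/2) := ENNReal.rpow_le_rpow h3 (by norm_num)
            _ = r ^ ((k:ℝ)*p) := by
                rw [← ENNReal.rpow_natCast r k, ← ENNReal.rpow_mul, ← ENNReal.rpow_mul]
                congr 1
                ring
        calc (∫⁻ y, ((‖d k y‖₊ : ℝ≥0∞)) ^ p ∂μ) ≤
            C * (Sk N α fun y => ((‖d k y‖₊ : ℝ≥0∞)) ^ p) ^ ((1:ℝ)/2) := h1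
          _ ≤ C * (r ^ ((k:ℝ)*p)) := mul_le_mul_right h2 C
      have hdiv : C * (r ^ ((k:ℝ)*p)) / (t k) ^ p ≤ C * q ^ k := by
        have e1 : (t k) ^ p = r ^ ((k:ℝ)*p/2) := by
          rw [ht, ← ENNReal.rpow_mul]
          congr 1
          ring
        have e2 : r ^ ((k:ℝ)*p) = r ^ ((k:ℝ)*p/2) * r ^ ((k:ℝ)*p/2) := by
          rw [← ENNReal.rpow_add_of_nonneg _ _ (by positivity) (by positivity)]
          congr 1
          ring
        have e3 : r ^ ((k:ℝ)*p/2) ≠ 0 := by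
          simp only [ne_eq, ENNReal.rpow_eq_zero_iff, not_or]
          exact ⟨fun h => hr0 h.1, fun h => hrtop h.1⟩
        have e4 : r ^ ((k:ℝ)*p/2) ≠ ∞ := by
          simp only [ne_eq, ENNReal.rpow_eq_top_iff, not_or]
          exact ⟨fun h => hr0 h.1, fun h => hrtop h.1⟩
        calc C * (r ^ ((k:ℝ)*p)) / (t k) ^ p
            = C * (r ^ ((k:ℝ)*p/2) * r ^ ((k:ℝ)*p/2)) / r ^ ((k:ℝ)*p/2) := by rw [e1, ← e2]
          _ = C * r ^ ((k:ℝ)*p/2) := by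
              rw [← mul_assoc, mul_div_assoc, ENNReal.div_self e3 e4, mul_one]
          _ ≤ C * r ^ ((k:ℝ)/2) := by
              refine mul_le_mul_right (ENNReal.rpow_le_rpow_of_exponent_ge hr1.le ?_) C
              have : (1:ℝ) ≤ p := hp
              have hk0 : (0:ℝ) ≤ (k:ℝ) := Nat.cast_nonneg k
              calc (k:ℝ)/2 = (k:ℝ)*1/2 := by ring
                _ ≤ (k:ℝ)*p/2 := by
                    have : (k:ℝ)*1 ≤ (k:ℝ)*p := mul_le_mul_of_nonneg_left hp hk0
                    linarith
          _ = C * q ^ k := by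
              rw [hq, ← ENNReal.rpow_natCast (r ^ ((1:ℝ)/2)) k, ← ENNReal.rpow_mul]
              congr 1
              ring_nf
      calc μ (s k) ≤ μ {y | (t k) ^ p ≤ ((‖d k y‖₊ : ℝ≥0∞)) ^ p} := measure_mono hsub
        _ ≤ (∫⁻ y, ((‖d k y‖₊ : ℝ≥0∞)) ^ p ∂μ) / (t k) ^ p := hcheb
        _ ≤ C * (r ^ ((k:ℝ)*p)) / (t k) ^ p := by
            exact ENNReal.div_le_div_right hint _
        _ ≤ C * q ^ k := hdiv
    have htsum : ∑' k, μ (s k) ≠ ∞ := by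
      refine ne_top_of_le_ne_top ?_ (ENNReal.tsum_le_tsum hmeasbound)
      rw [ENNReal.tsum_mul_left, ENNReal.tsum_geometric]
      exact ENNReal.mul_ne_top hCtop (by
        simp only [ne_eq, ENNReal.inv_eq_top]
        intro h
        rw [tsub_eq_zero_iff_le] at h
        exact absurd h (not_le.mpr hq1))
    have hlimsup : μ (limsup s atTop) = 0 := measure_limsup_atTop_eq_zero htsum
    have hae := measure_eq_zero_iff_ae_notMem.mp hlimsup
    rw [ae_restrict_iff' measurableSet_ball] at hae
    filter_upwards [hae] with y hy hyball
    have := hy hyball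
    rw [mem_limsup_iff_frequently_mem, Filter.not_frequently] at this
    filter_upwards [this] with k hk
    exact not_le.mp hk
  have hcover := ae_all_iff.mpr hBC
  filter_upwards [hcover] with y hy
  obtain ⟨j, hj⟩ := exists_nat_gt ‖y‖
  have hball : y ∈ Metric.ball (0:E N) ((j:ℝ)+1) := by
    rw [Metric.mem_ball, dist_zero_right]
    linarith
  filter_upwards [hy j hball] with k hk
  -- convert to real bound
  have hq' : (0:ℝ) < ((2:ℝ)⁻¹) ^ ((1:ℝ)/2) := Real.rpow_pos_of_pos (by norm_num) _
  have hqk : (0:ℝ) < (((2:ℝ)⁻¹) ^ ((1:ℝ)/2)) ^ k := pow_pos hq' k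
  have htk : t k = ENNReal.ofReal ((((2:ℝ)⁻¹) ^ ((1:ℝ)/2)) ^ k) := by
    have h2inv : r = ENNReal.ofReal ((2:ℝ)⁻¹) := by
      rw [hr, ENNReal.ofReal_inv_of_pos (by norm_num)]
      norm_num
    show r ^ ((k:ℝ)/2) = _
    rw [h2inv, ENNReal.ofReal_rpow_of_pos (by norm_num)]
    congr 1
    rw [← Real.rpow_natCast (((2:ℝ)⁻¹) ^ ((1:ℝ)/2)) k, ← Real.rpow_mul (by norm_num)]
    congr 1
    ring
  rw [htk, ← enorm_eq_nnnorm, ← ofReal_norm] at hk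
  exact (ENNReal.ofReal_lt_ofReal_iff hqk).mp hk |>.le

end CoulombAux

open CoulombAux Filter in
/-- The map `u ↦ (∫ |I_{α/2} ∗ |u|^p|²)^{1/(2p)}` is a norm on the Coulomb space
`Q^{α,p}(ℝᴺ,ℝᴺ)` of measurable fields with finite Coulomb energy (triangle inequality,
absolute homogeneity, definiteness up to a.e. equality), and the Coulomb space is
complete with respect to it. -/
theorem stmt5 (N : ℕ) (hN : 1 ≤ N) (α p : ℝ) (hα : 0 < α) (hαN : α < N) (hp : 1 ≤ p) :
    -- triangle inequality
    (∀ u v : EuclideanSpace ℝ (Fin N) → EuclideanSpace ℝ (Fin N),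
        AEMeasurable u → AEMeasurable v →
        coulombNorm N α p (u + v) ≤ coulombNorm N α p u + coulombNorm N α p v) ∧
    -- absolute homogeneity
    (∀ (c : ℝ) (u : EuclideanSpace ℝ (Fin N) → EuclideanSpace ℝ (Fin N)),
        coulombNorm N α p (c • u) = ENNReal.ofReal |c| * coulombNorm N α p u) ∧
    -- definiteness (up to a.e. equality)
    (∀ u : EuclideanSpace ℝ (Fin N) → EuclideanSpace ℝ (Fin N), AEMeasurable u →
        (coulombNorm N α p u = 0 ↔ u =ᵐ[volume] 0)) ∧
    -- completeness
    (∀ u : ℕ → EuclideanSpace ℝ (Fin N) → EuclideanSpace ℝ (Fin N),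
        (∀ n, AEMeasurable (u n)) →
        (∀ n, coulombEnergy N α p (u n) ≠ ∞) →
        (∀ ε : ℝ≥0∞, 0 < ε → ∃ n₀ : ℕ, ∀ m n, n₀ ≤ m → n₀ ≤ n →
            coulombNorm N α p (u m - u n) < ε) →
        ∃ v : EuclideanSpace ℝ (Fin N) → EuclideanSpace ℝ (Fin N),
          AEMeasurable v ∧ coulombEnergy N α p v ≠ ∞ ∧
            Filter.Tendsto (fun n => coulombNorm N α p (u n - v)) Filter.atTop (nhds 0)) := by
  have hp0 : (0:ℝ) < p := by linarith
  have hexp : (0:ℝ) < 1/(2*p) := by positivity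
  -- triangle inequality
  have tri : ∀ u v : E N → E N, AEMeasurable u → AEMeasurable v →
      coulombNorm N α p (u + v) ≤ coulombNorm N α p u + coulombNorm N α p v := by
    intro u v hu hv
    set u' := hu.mk u with hu'
    set v' := hv.mk v with hv'
    have hmu : Measurable u' := hu.measurable_mk
    have hmv : Measurable v' := hv.measurable_mk
    rw [show coulombNorm N α p (u + v) = coulombNorm N α p (u' + v') from
        norm_congr N α p (hu.ae_eq_mk.add hv.ae_eq_mk),
      norm_congr N α p hu.ae_eq_mk, norm_congr N α p hv.ae_eq_mk]
    have e1 : coulombNorm N α p (u' + v') =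
        Sk N α (fun y => ((‖u' y + v' y‖₊ : ℝ≥0∞)) ^ p) ^ (1/(2*p)) := rfl
    have e2 : coulombNorm N α p u' =
        Sk N α (fun y => ((‖u' y‖₊ : ℝ≥0∞)) ^ p) ^ (1/(2*p)) := rfl
    have e3 : coulombNorm N α p v' =
        Sk N α (fun y => ((‖v' y‖₊ : ℝ≥0∞)) ^ p) ^ (1/(2*p)) := rfl
    rw [e1, e2, e3]
    have step : Sk N α (fun y => ((‖u' y + v' y‖₊ : ℝ≥0∞)) ^ p) ≤
        Sk N α (fun y => ((‖u' y‖₊ : ℝ≥0∞) + (‖v' y‖₊ : ℝ≥0∞)) ^ p) := by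
      refine Sk_mono N α (Filter.Eventually.of_forall fun y => ?_)
      refine ENNReal.rpow_le_rpow ?_ hp0.le
      rw [← ENNReal.coe_add]
      exact ENNReal.coe_le_coe.mpr (nnnorm_add_le _ _)
    calc Sk N α (fun y => ((‖u' y + v' y‖₊ : ℝ≥0∞)) ^ p) ^ (1/(2*p))
        ≤ Sk N α (fun y => ((‖u' y‖₊ : ℝ≥0∞) + (‖v' y‖₊ : ℝ≥0∞)) ^ p) ^ (1/(2*p)) :=
          ENNReal.rpow_le_rpow step hexp.le
      _ ≤ Sk N α (fun y => ((‖u' y‖₊ : ℝ≥0∞)) ^ p) ^ (1/(2*p)) +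
          Sk N α (fun y => ((‖v' y‖₊ : ℝ≥0∞)) ^ p) ^ (1/(2*p)) :=
          Sk_triangle N α p hp hmu.enorm hmv.enorm
  refine ⟨tri, fun c u => norm_smul N α p hp c u, ?_, ?_⟩
  · -- definiteness
    intro u hu
    have key := norm_eq_zero_iff N α p hN hα hαN hp hu.measurable_mk
    rw [norm_congr N α p hu.ae_eq_mk]
    constructor
    · intro h
      exact hu.ae_eq_mk.trans (key.mp h)
    · intro h
      exact key.mpr (hu.ae_eq_mk.symm.trans h)
  · -- completeness
    intro u hmeas hfin hcauchy
    set w : ℕ → E N → E N := fun n => (hmeas n).mk (u n) with hw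
    have hwm : ∀ n, Measurable (w n) := fun n => (hmeas n).measurable_mk
    have hue : ∀ n, u n =ᵐ[volume] w n := fun n => (hmeas n).ae_eq_mk
    have hnorm_eq : ∀ m n, coulombNorm N α p (u m - u n) = coulombNorm N α p (w m - w n) :=
      fun m n => norm_congr N α p ((hue m).sub (hue n))
    have hhalf : ∀ k : ℕ, (0:ℝ≥0∞) < 2⁻¹ ^ k := fun k =>
      pos_iff_ne_zero.mpr (pow_ne_zero k (by norm_num))
    set n₀ : ℕ → ℕ := fun k => (hcauchy (2⁻¹ ^ k) (hhalf k)).choose with hn₀def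
    have hn₀ : ∀ k, ∀ m n, n₀ k ≤ m → n₀ k ≤ n →
        coulombNorm N α p (u m - u n) < 2⁻¹ ^ k :=
      fun k => (hcauchy (2⁻¹ ^ k) (hhalf k)).choose_spec
    set φ : ℕ → ℕ := fun k => Nat.rec (n₀ 0) (fun k ih => max (ih + 1) (n₀ (k+1))) k with hφdef
    have hφmono : StrictMono φ := strictMono_nat_of_lt_succ fun k =>
      lt_of_lt_of_le (Nat.lt_succ_self _) (le_max_left _ _)
    have hφn₀ : ∀ k, n₀ k ≤ φ k := by
      intro k
      cases k with
      | zero => exact le_rfl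
      | succ k => exact le_max_right _ _
    set g : ℕ → E N → E N := fun k => w (φ k) with hg
    set d : ℕ → E N → E N := fun k => g (k+1) - g k with hd
    have hdm : ∀ k, Measurable (d k) := fun k => (hwm _).sub (hwm _)
    have hdnorm : ∀ k, coulombNorm N α p (d k) < 2⁻¹ ^ k := by
      intro k
      have : d k = w (φ (k+1)) - w (φ k) := rfl
      rw [this, ← hnorm_eq]
      exact hn₀ k _ _ (le_trans (hφn₀ k) (hφmono.monotone (Nat.le_succ k))) (hφn₀ k)
    have hdE : ∀ k, coulombEnergy N α p (d k) ≤ ((2:ℝ≥0∞)⁻¹ ^ k) ^ ((2*p : ℝ)) := by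
      intro k
      have h1 : coulombEnergy N α p (d k) = (coulombNorm N α p (d k)) ^ ((2*p : ℝ)) := by
        unfold coulombNorm
        rw [← ENNReal.rpow_mul, one_div, inv_mul_cancel₀ (ne_of_gt (by positivity)),
          ENNReal.rpow_one]
      rw [h1]
      exact ENNReal.rpow_le_rpow (hdnorm k).le (by positivity)
    -- a.e. convergence
    have hsmall := ae_eventually_small N α p hN hα hαN hp hdm hdE
    have hconv : ∀ᵐ y, ∃ l, Tendsto (fun k => g k y) atTop (nhds l) := by
      filter_upwards [hsmall] with y hy
      refine cauchySeq_tendsto_of_complete ?_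
      refine cauchySeq_of_summable_dist ?_
      obtain ⟨K, hK⟩ := eventually_atTop.mp hy
      set q' : ℝ := ((2:ℝ)⁻¹) ^ ((1:ℝ)/2) with hq'
      have hq'0 : 0 ≤ q' := (Real.rpow_pos_of_pos (by norm_num) _).le
      have hq'1 : q' < 1 := Real.rpow_lt_one (by norm_num) (by norm_num) (by norm_num)
      rw [← summable_nat_add_iff K]
      have hgeo : Summable (fun n : ℕ => q' ^ (n + K)) := by
        simp_rw [pow_add]
        exact (summable_geometric_of_lt_one hq'0 hq'1).mul_right _
      refine Summable.of_nonneg_of_le (fun n => dist_nonneg) (fun n => ?_) hgeo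
      have : dist (g (n + K) y) (g (n + K + 1) y) = ‖d (n + K) y‖ := by
        rw [dist_eq_norm, norm_sub_rev]
        rfl
      rw [this]
      exact hK (n + K) (Nat.le_add_left K n)
    obtain ⟨v, hvm, hvt⟩ := measurable_limit_of_tendsto_metrizable_ae
      (f := fun k => g k) (fun k => (hwm (φ k)).aemeasurable) hconv
    -- convergence of norms
    have hconv2 : ∀ ε : ℝ≥0∞, 0 < ε → ∃ n₁ : ℕ, ∀ n, n₁ ≤ n →
        coulombNorm N α p (u n - v) ≤ ε := by
      intro ε hε
      obtain ⟨m₀, hm₀⟩ := hcauchy ε hε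
      refine ⟨m₀, fun n hn => ?_⟩
      have hFatou : coulombEnergy N α p (fun y => w n y - v y) ≤
          liminf (fun k => coulombEnergy N α p (fun y => w n y - g k y)) atTop := by
        refine energy_le_liminf N α p hp (fun k => (hwm n).sub (hwm (φ k))) ?_
        filter_upwards [hvt] with y hy
        exact Tendsto.const_sub (w n y) hy
      have hbound : ∀ᶠ k in atTop,
          coulombEnergy N α p (fun y => w n y - g k y) ≤ ε ^ ((2*p : ℝ)) := by
        filter_upwards [eventually_ge_atTop m₀] with k hk
        have e1 : coulombEnergy N α p (fun y => w n y - g k y) =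
            coulombEnergy N α p (u n - u (φ k)) := by
          refine (energy_congr N α p ?_).symm
          have : (fun y => w n y - g k y) = w n - w (φ k) := rfl
          rw [this]
          exact (hue n).sub (hue (φ k))
        rw [e1]
        have e2 : coulombEnergy N α p (u n - u (φ k)) =
            (coulombNorm N α p (u n - u (φ k))) ^ ((2*p : ℝ)) := by
          unfold coulombNorm
          rw [← ENNReal.rpow_mul, one_div, inv_mul_cancel₀ (ne_of_gt (by positivity)),
            ENNReal.rpow_one]
        rw [e2]
        refine ENNReal.rpow_le_rpow ?_ (by positivity)
        exact (hm₀ n (φ k) hn (le_trans hk hφmono.le_apply)).le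
      have hlim : coulombEnergy N α p (fun y => w n y - v y) ≤ ε ^ ((2*p : ℝ)) := by
        refine le_trans hFatou ?_
        calc liminf (fun k => coulombEnergy N α p (fun y => w n y - g k y)) atTop
            ≤ liminf (fun _ : ℕ => ε ^ ((2*p : ℝ))) atTop := liminf_le_liminf hbound
          _ = ε ^ ((2*p : ℝ)) := liminf_const _
      have e3 : coulombNorm N α p (u n - v) = coulombNorm N α p (fun y => w n y - v y) := by
        refine norm_congr N α p ?_
        have : (fun y => w n y - v y) = w n - v := rfl
        rw [this]
        exact (hue n).sub (Filter.EventuallyEq.refl _ v)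
      rw [e3]
      unfold coulombNorm
      calc coulombEnergy N α p (fun y => w n y - v y) ^ (1/(2*p))
          ≤ (ε ^ ((2*p : ℝ))) ^ (1/(2*p)) := ENNReal.rpow_le_rpow hlim hexp.le
        _ = ε := by
            rw [← ENNReal.rpow_mul, mul_one_div, div_self (ne_of_gt (by positivity)),
              ENNReal.rpow_one]
    refine ⟨v, hvm.aemeasurable, ?_, ?_⟩
    · -- finite energy
      obtain ⟨n₁, hn₁⟩ := hconv2 1 one_pos
      have h1 : coulombNorm N α p (u n₁ - v) ≤ 1 := hn₁ n₁ le_rfl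
      have h2 : coulombNorm N α p v ≤ coulombNorm N α p (v - u n₁) + coulombNorm N α p (u n₁) := by
        have := tri (v - u n₁) (u n₁) (hvm.aemeasurable.sub (hmeas n₁)) (hmeas n₁)
        rwa [sub_add_cancel] at this
      have h3 : coulombNorm N α p (v - u n₁) = coulombNorm N α p (u n₁ - v) :=
        norm_neg_sub N α p v (u n₁)
      have h4 : coulombNorm N α p (u n₁) ≠ ∞ := by
        unfold coulombNorm
        exact ENNReal.rpow_ne_top_of_nonneg hexp.le (hfin n₁)
      have h5 : coulombNorm N α p v ≠ ∞ := by
        refine ne_top_of_le_ne_top ?_ h2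
        rw [h3]
        exact ENNReal.add_ne_top.mpr ⟨ne_top_of_le_ne_top ENNReal.one_ne_top h1, h4⟩
      intro hEtop
      apply h5
      unfold coulombNorm
      rw [hEtop]
      exact ENNReal.top_rpow_of_pos hexp
    · -- tendsto
      rw [ENNReal.tendsto_atTop_zero]
      intro ε hε
      obtain ⟨n₁, hn₁⟩ := hconv2 ε hε
      exact ⟨n₁, hn₁⟩
end

section
/- Let N ≥ 1, α ∈ (0,N), p ≥ 1. If (u_n) is a bounded sequence in Q^{α,p}(ℝᴺ, ℝᴺ) (i.e. sup_n ∫ |I_{α/2} ∗ |u_n|^p|² dx < ∞) and u_n → u in L¹_loc(ℝᴺ, ℝᴺ), then u ∈ Q^{α,p} and ∫ |I_{α/2} ∗ |u|^p|² dx ≤ liminf_n ∫ |I_{α/2} ∗ |u_n|^p|² dx. -/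
open MeasureTheory ENNReal Metric Filter Topology

theorem coulombEnergy_congr {N : ℕ} {α p : ℝ}
    {f g : EuclideanSpace ℝ (Fin N) → EuclideanSpace ℝ (Fin N)} (h : f =ᵐ[volume] g) :
    coulombEnergy N α p f = coulombEnergy N α p g := by
  unfold coulombEnergy
  refine lintegral_congr fun x => ?_
  congr 1
  refine lintegral_congr_ae (h.mono fun y hy => ?_)
  simp only [hy]

noncomputable def rieszConst (N : ℕ) (γ : ℝ) : ℝ :=
  Real.Gamma (((N : ℝ) - γ) / 2) / (Real.Gamma (γ / 2) * Real.pi ^ ((N : ℝ) / 2) * (2 : ℝ) ^ γ)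

theorem rieszKernel_eq {N : ℕ} {γ : ℝ} (x : EuclideanSpace ℝ (Fin N)) :
    rieszKernel N γ x = rieszConst N γ * ‖x‖ ^ (-(((N : ℝ) - γ))) := rfl

theorem rieszConst_pos {N : ℕ} {γ : ℝ} (h0 : 0 < γ) (hN : γ < N) : 0 < rieszConst N γ := by
  apply div_pos (Real.Gamma_pos_of_pos (by linarith))
  exact mul_pos (mul_pos (Real.Gamma_pos_of_pos (by linarith))
    (Real.rpow_pos_of_pos Real.pi_pos _)) (Real.rpow_pos_of_pos two_pos _)

theorem rieszKernel_ge {N : ℕ} {γ : ℝ} (h0 : 0 < γ) (hN : γ < N) {R : ℝ} (hR : 0 < R)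
    {x : EuclideanSpace ℝ (Fin N)} (hx0 : x ≠ 0) (hxR : ‖x‖ ≤ 2 * R) :
    rieszConst N γ * (2 * R) ^ (-(((N : ℝ) - γ))) ≤ rieszKernel N γ x := by
  rw [rieszKernel_eq]
  have hx : 0 < ‖x‖ := norm_pos_iff.mpr hx0
  exact mul_le_mul_of_nonneg_left
    (Real.rpow_le_rpow_of_nonpos hx hxR (by linarith)) (rieszConst_pos h0 hN).le

theorem local_pmass_bound {N : ℕ} (hN : 1 ≤ N) {α p : ℝ} (hα : 0 < α) (hαN : α < N)
    {C : ℝ≥0∞} (hC : C ≠ ∞) {R : ℝ} (hR : 0 < R) :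
    ∃ M : ℝ≥0∞, M ≠ ∞ ∧ ∀ w : EuclideanSpace ℝ (Fin N) → EuclideanSpace ℝ (Fin N),
      coulombEnergy N α p w ≤ C →
      ∫⁻ y in Metric.closedBall 0 R, (‖w y‖₊ : ℝ≥0∞) ^ p ≤ M := by
  set γ := α / 2 with hγ
  have h0 : 0 < γ := by positivity
  have hγN : γ < N := by
    have : γ < α := by simp [hγ]; linarith
    linarith
  set κ : ℝ := rieszConst N γ * (2 * R) ^ (-(((N : ℝ) - γ))) with hκ
  have hκpos : 0 < κ := mul_pos (rieszConst_pos h0 hγN) (Real.rpow_pos_of_pos (by linarith) _)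
  set B := Metric.closedBall (0 : EuclideanSpace ℝ (Fin N)) R with hB
  have hvB0 : volume B ≠ 0 := (measure_closedBall_pos volume (0:EuclideanSpace ℝ (Fin N)) hR).ne'
  have hvBtop : volume B ≠ ∞ := measure_closedBall_lt_top.ne
  have hκ0 : ENNReal.ofReal κ ≠ 0 := by
    simp [ENNReal.ofReal_eq_zero, not_le, hκpos]
  refine ⟨(C / volume B) ^ ((2:ℝ)⁻¹) / ENNReal.ofReal κ, ?_, ?_⟩
  · apply ne_of_lt
    apply ENNReal.div_lt_top _ hκ0
    apply ENNReal.rpow_ne_top_of_nonneg (by norm_num)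
    exact (ENNReal.div_lt_top hC hvB0).ne
  intro w hw
  set m := ∫⁻ y in B, (‖w y‖₊ : ℝ≥0∞) ^ p with hm
  have h1 : ∀ x ∈ B, ENNReal.ofReal κ * m
      ≤ ∫⁻ y, ENNReal.ofReal (rieszKernel N γ (x - y)) * (‖w y‖₊ : ℝ≥0∞) ^ p := by
    intro x hxB
    have : ENNReal.ofReal κ * m = ∫⁻ y in B, ENNReal.ofReal κ * (‖w y‖₊ : ℝ≥0∞) ^ p :=
      (lintegral_const_mul' _ _ ENNReal.ofReal_ne_top).symm
    rw [this]
    refine le_trans (lintegral_mono_ae ?_) (setLIntegral_le_lintegral _ _)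
    have hxne : ∀ᵐ y ∂(volume.restrict B), y ≠ x := by
      refine ae_restrict_of_ae ?_
      haveI : Nonempty (Fin N) := ⟨⟨0, hN⟩⟩
      haveI : Nontrivial (EuclideanSpace ℝ (Fin N)) := inferInstance
      have : volume ({x} : Set (EuclideanSpace ℝ (Fin N))) = 0 := measure_singleton x
      filter_upwards [measure_eq_zero_iff_ae_notMem.mp this] with y hy
      simpa using hy
    filter_upwards [ae_restrict_mem measurableSet_closedBall, hxne] with y hyB hyx
    apply mul_le_mul_left
    apply ENNReal.ofReal_le_ofReal
    apply rieszKernel_ge h0 hγN hR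
    · simpa [sub_eq_zero] using (Ne.symm hyx)
    · calc ‖x - y‖ ≤ ‖x‖ + ‖y‖ := norm_sub_le _ _
        _ ≤ R + R := by
            exact add_le_add (mem_closedBall_zero_iff.mp hxB) (mem_closedBall_zero_iff.mp hyB)
        _ = 2 * R := by ring
  have h2 : volume B * (ENNReal.ofReal κ * m) ^ 2 ≤ C := by
    calc volume B * (ENNReal.ofReal κ * m) ^ 2
        = ∫⁻ _ in B, (ENNReal.ofReal κ * m) ^ 2 := by rw [setLIntegral_const, mul_comm]
      _ ≤ ∫⁻ x in B, (∫⁻ y, ENNReal.ofReal (rieszKernel N γ (x - y)) * (‖w y‖₊ : ℝ≥0∞) ^ p) ^ 2 := by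
          refine lintegral_mono_ae ?_
          filter_upwards [ae_restrict_mem measurableSet_closedBall] with x hxB
          exact pow_le_pow_left' (h1 x hxB) 2
      _ ≤ ∫⁻ x, (∫⁻ y, ENNReal.ofReal (rieszKernel N γ (x - y)) * (‖w y‖₊ : ℝ≥0∞) ^ p) ^ 2 :=
          setLIntegral_le_lintegral _ _
      _ ≤ C := hw
  have h3 : (ENNReal.ofReal κ * m) ^ 2 ≤ C / volume B := by
    rw [ENNReal.le_div_iff_mul_le (Or.inl hvB0) (Or.inl hvBtop), mul_comm]
    exact h2
  have h4 : ENNReal.ofReal κ * m ≤ (C / volume B) ^ ((2:ℝ)⁻¹) := by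
    have := ENNReal.rpow_le_rpow (x := (ENNReal.ofReal κ * m) ^ 2) h3 (by norm_num : (0:ℝ) ≤ 2⁻¹)
    rw [← ENNReal.rpow_natCast (ENNReal.ofReal κ * m) 2, ← ENNReal.rpow_mul] at this
    rw [show ((2:ℕ):ℝ) * 2⁻¹ = 1 by norm_num, ENNReal.rpow_one] at this
    exact this
  rw [ENNReal.le_div_iff_mul_le (Or.inl hκ0) (Or.inl ENNReal.ofReal_ne_top), mul_comm]
  exact h4

theorem le_one_add_rpow {t : ℝ≥0∞} {p : ℝ} (hp : 1 ≤ p) : t ≤ 1 + t ^ p := by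
  rcases le_total t 1 with h | h
  · exact le_add_right h
  · calc t = t ^ (1:ℝ) := (ENNReal.rpow_one t).symm
      _ ≤ t ^ p := ENNReal.rpow_le_rpow_of_exponent_le h hp
      _ ≤ 1 + t ^ p := le_add_self

theorem local_l1_bound {N : ℕ} (hN : 1 ≤ N) {α p : ℝ} (hα : 0 < α) (hαN : α < N) (hp : 1 ≤ p)
    {C : ℝ≥0∞} (hC : C ≠ ∞) {R : ℝ} (hR : 0 < R) :
    ∃ M : ℝ≥0∞, M ≠ ∞ ∧ ∀ w : EuclideanSpace ℝ (Fin N) → EuclideanSpace ℝ (Fin N),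
      coulombEnergy N α p w ≤ C →
      ∫⁻ y in Metric.closedBall 0 R, (‖w y‖₊ : ℝ≥0∞) ≤ M := by
  obtain ⟨M, hM, hMw⟩ := local_pmass_bound hN hα hαN hC hR
  refine ⟨volume (Metric.closedBall (0:EuclideanSpace ℝ (Fin N)) R) + M, ?_, ?_⟩
  · exact ENNReal.add_ne_top.mpr ⟨measure_closedBall_lt_top.ne, hM⟩
  intro w hw
  calc ∫⁻ y in Metric.closedBall 0 R, (‖w y‖₊ : ℝ≥0∞)
      ≤ ∫⁻ y in Metric.closedBall 0 R, (1 + (‖w y‖₊ : ℝ≥0∞) ^ p) :=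
        lintegral_mono fun y => le_one_add_rpow hp
    _ = volume (Metric.closedBall (0:EuclideanSpace ℝ (Fin N)) R)
        + ∫⁻ y in Metric.closedBall 0 R, (‖w y‖₊ : ℝ≥0∞) ^ p := by
        rw [lintegral_add_left measurable_const]
        simp
    _ ≤ _ := add_le_add_right (hMw w hw) _

theorem integrableOn_of_lintegral_bound {N : ℕ}
    {f : EuclideanSpace ℝ (Fin N) → EuclideanSpace ℝ (Fin N)} (hf : Measurable f)
    {s : Set (EuclideanSpace ℝ (Fin N))} {M : ℝ≥0∞} (hM : M ≠ ∞)
    (h : ∫⁻ y in s, (‖f y‖₊ : ℝ≥0∞) ≤ M) :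
    IntegrableOn f s volume :=
  ⟨hf.aestronglyMeasurable.restrict, lt_of_le_of_lt h hM.lt_top⟩

theorem v_local_lintegral_bound {N : ℕ}
    {u : ℕ → EuclideanSpace ℝ (Fin N) → EuclideanSpace ℝ (Fin N)}
    {v : EuclideanSpace ℝ (Fin N) → EuclideanSpace ℝ (Fin N)}
    (hum : ∀ n, Measurable (u n)) (hvm : Measurable v)
    {R : ℝ} {M : ℝ≥0∞} (hM : M ≠ ∞)
    (hu1 : ∀ n, ∫⁻ y in Metric.closedBall 0 R, (‖u n y‖₊ : ℝ≥0∞) ≤ M)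
    (hloc : ∀ K : Set (EuclideanSpace ℝ (Fin N)), IsCompact K →
        Tendsto (fun n => ∫ x in K, ‖u n x - v x‖) atTop (𝓝 0)) :
    ∫⁻ y in Metric.closedBall 0 R, (‖v y‖₊ : ℝ≥0∞) ≤ M + 1 := by
  set B := Metric.closedBall (0 : EuclideanSpace ℝ (Fin N)) R with hB
  have hBmeas : MeasurableSet B := measurableSet_closedBall
  -- Step 1: bound on compact subsets of B where v is bounded
  have key : ∀ (j : ℕ) (K : Set (EuclideanSpace ℝ (Fin N))), IsCompact K → K ⊆ B →
      (∀ x ∈ K, (‖v x‖₊ : ℝ≥0∞) ≤ j) → ∫⁻ y in K, (‖v y‖₊ : ℝ≥0∞) ≤ M := by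
    intro j K hK hKB hvb
    have hKfin : volume K ≠ ∞ := hK.measure_lt_top.ne
    have hv_int : IntegrableOn v K volume := by
      refine ⟨hvm.aestronglyMeasurable.restrict, ?_⟩
      rw [hasFiniteIntegral_def]
      calc ∫⁻ y in K, (‖v y‖₊ : ℝ≥0∞)
          ≤ ∫⁻ _ in K, (j : ℝ≥0∞) := by
            refine lintegral_mono_ae ?_
            filter_upwards [ae_restrict_mem hK.measurableSet] with x hx
            exact hvb x hx
        _ < ∞ := by
            rw [setLIntegral_const]
            exact ENNReal.mul_lt_top (by simp) hKfin.lt_top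
    have hu_int : ∀ n, IntegrableOn (u n) K volume := fun n =>
      (integrableOn_of_lintegral_bound (hum n) hM (hu1 n)).mono_set hKB
    have hdiff_int : ∀ n, IntegrableOn (fun x => u n x - v x) K volume := fun n =>
      (hu_int n).sub hv_int
    have hbound : ∀ n, ∫⁻ y in K, (‖v y‖₊ : ℝ≥0∞)
        ≤ ENNReal.ofReal (∫ x in K, ‖u n x - v x‖) + M := by
      intro n
      have htri : ∫⁻ y in K, (‖v y‖₊ : ℝ≥0∞)
          ≤ (∫⁻ y in K, (‖u n y - v y‖₊ : ℝ≥0∞)) + ∫⁻ y in K, (‖u n y‖₊ : ℝ≥0∞) := by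
        rw [← lintegral_add_left (f := fun y => (‖u n y - v y‖₊ : ℝ≥0∞)) ((hum n).sub hvm).nnnorm.coe_nnreal_ennreal]
        refine lintegral_mono fun y => ?_
        have h0 : v y = u n y - (u n y - v y) := by abel
        calc (‖v y‖₊ : ℝ≥0∞) = (‖u n y - (u n y - v y)‖₊ : ℝ≥0∞) := by rw [← h0]
          _ ≤ (‖u n y‖₊ : ℝ≥0∞) + ‖u n y - v y‖₊ := by exact_mod_cast nnnorm_sub_le _ _
          _ = (‖u n y - v y‖₊ : ℝ≥0∞) + ‖u n y‖₊ := add_comm _ _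
      have heq : ENNReal.ofReal (∫ x in K, ‖u n x - v x‖)
          = ∫⁻ y in K, (‖u n y - v y‖₊ : ℝ≥0∞) :=
        ofReal_integral_norm_eq_lintegral_enorm (hdiff_int n)
      rw [heq]
      exact htri.trans (add_le_add_right ((lintegral_mono_set hKB).trans (hu1 n)) _)
    have htend : Tendsto (fun n => ENNReal.ofReal (∫ x in K, ‖u n x - v x‖) + M)
        atTop (𝓝 (0 + M)) := by
      refine Tendsto.add ?_ tendsto_const_nhds
      have := ENNReal.tendsto_ofReal (hloc K hK)
      simpa using this
    rw [zero_add] at htend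
    exact ge_of_tendsto htend (Filter.Eventually.of_forall hbound)
  -- Step 2: exhaust B by compacts
  have hmain : ∀ j : ℕ, ∫⁻ y in {x ∈ B | (‖v x‖₊ : ℝ≥0∞) ≤ j}, (‖v y‖₊ : ℝ≥0∞) ≤ M + 1 := by
    intro j
    set Ej := {x ∈ B | (‖v x‖₊ : ℝ≥0∞) ≤ j} with hEj
    have hEjmeas : MeasurableSet Ej := by
      refine hBmeas.inter ?_
      exact (hvm.nnnorm.coe_nnreal_ennreal) measurableSet_Iic
    have hEjfin : volume Ej ≠ ∞ :=
      ((measure_mono (Set.sep_subset _ _)).trans_lt measure_closedBall_lt_top).ne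
    have hε : ((j : ℝ≥0∞) + 1)⁻¹ ≠ 0 := by
      simp [ENNReal.inv_ne_zero]
    obtain ⟨K, hKE, hK, hKmeas⟩ := hEjmeas.exists_isCompact_lt_add hEjfin hε
    have hKB : K ⊆ B := hKE.trans (Set.sep_subset _ _)
    have h1 : ∫⁻ y in K, (‖v y‖₊ : ℝ≥0∞) ≤ M :=
      key j K hK hKB (fun x hx => (hKE hx).2)
    have hdiff : volume (Ej \ K) ≤ ((j : ℝ≥0∞) + 1)⁻¹ := by
      rw [measure_diff hKE hK.measurableSet.nullMeasurableSet hK.measure_lt_top.ne]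
      exact tsub_le_iff_right.mpr (by rw [add_comm]; exact hKmeas.le)
    have h2 : ∫⁻ y in Ej \ K, (‖v y‖₊ : ℝ≥0∞) ≤ 1 := by
      calc ∫⁻ y in Ej \ K, (‖v y‖₊ : ℝ≥0∞)
          ≤ ∫⁻ _ in Ej \ K, (j : ℝ≥0∞) := by
            refine lintegral_mono_ae ?_
            filter_upwards [ae_restrict_mem (hEjmeas.diff hK.measurableSet)] with x hx
            exact hx.1.2
        _ = (j : ℝ≥0∞) * volume (Ej \ K) := setLIntegral_const _ _
        _ ≤ (j : ℝ≥0∞) * ((j : ℝ≥0∞) + 1)⁻¹ := mul_le_mul_right hdiff _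
        _ ≤ ((j : ℝ≥0∞) + 1) * ((j : ℝ≥0∞) + 1)⁻¹ := mul_le_mul_left le_self_add _
        _ = 1 := ENNReal.mul_inv_cancel (by simp) (by simp)
    calc ∫⁻ y in Ej, (‖v y‖₊ : ℝ≥0∞)
        ≤ ∫⁻ y in K ∪ (Ej \ K), (‖v y‖₊ : ℝ≥0∞) := by
          refine lintegral_mono_set fun x hx => ?_
          by_cases h : x ∈ K
          · exact Set.mem_union_left _ h
          · exact Set.mem_union_right _ ⟨hx, h⟩
      _ ≤ (∫⁻ y in K, (‖v y‖₊ : ℝ≥0∞)) + ∫⁻ y in Ej \ K, (‖v y‖₊ : ℝ≥0∞) :=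
          lintegral_union_le _ _ _
      _ ≤ M + 1 := add_le_add h1 h2
  -- Step 3: monotone convergence
  have hsup : ∫⁻ y in B, (‖v y‖₊ : ℝ≥0∞)
      = ⨆ j : ℕ, ∫⁻ y in {x ∈ B | (‖v x‖₊ : ℝ≥0∞) ≤ j}, (‖v y‖₊ : ℝ≥0∞) := by
    have hmeasf : Measurable fun y => (‖v y‖₊ : ℝ≥0∞) := hvm.nnnorm.coe_nnreal_ennreal
    have hEmeas : ∀ j : ℕ, MeasurableSet {x ∈ B | (‖v x‖₊ : ℝ≥0∞) ≤ (j:ℝ≥0∞)} := fun j =>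
      hBmeas.inter (hmeasf measurableSet_Iic)
    have heq : ∀ j : ℕ, ∫⁻ y in {x ∈ B | (‖v x‖₊ : ℝ≥0∞) ≤ j}, (‖v y‖₊ : ℝ≥0∞)
        = ∫⁻ y, ({x ∈ B | (‖v x‖₊ : ℝ≥0∞) ≤ j}).indicator (fun y => (‖v y‖₊ : ℝ≥0∞)) y :=
      fun j => (lintegral_indicator (hEmeas j) _).symm
    rw [← lintegral_indicator hBmeas]
    simp_rw [heq]
    rw [← lintegral_iSup]
    · congr 1
      funext x
      by_cases hx : x ∈ B
      · obtain ⟨j, hj⟩ : ∃ j : ℕ, (‖v x‖₊ : ℝ≥0∞) ≤ (j : ℝ≥0∞) := by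
          obtain ⟨j, hj⟩ := exists_nat_ge ‖v x‖₊
          exact ⟨j, by exact_mod_cast hj⟩
        rw [Set.indicator_of_mem hx]
        have hmem : x ∈ {z ∈ B | (‖v z‖₊ : ℝ≥0∞) ≤ (j : ℝ≥0∞)} := ⟨hx, hj⟩
        refine le_antisymm (le_iSup_of_le j (le_of_eq (Set.indicator_of_mem hmem (fun y => (‖v y‖₊ : ℝ≥0∞))).symm)) ?_
        exact iSup_le fun i => Set.indicator_le_self _ _ x
      · have hz : ∀ i : ℕ, ({x ∈ B | (‖v x‖₊ : ℝ≥0∞) ≤ (i:ℝ≥0∞)}).indicator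
            (fun y => (‖v y‖₊ : ℝ≥0∞)) x = 0 :=
          fun i => Set.indicator_of_notMem (fun h => hx h.1) _
        rw [Set.indicator_of_notMem hx]
        simp only [hz, iSup_const]
    · exact fun j => hmeasf.indicator (hEmeas j)
    · intro i j hij
      refine fun x => ?_
      refine Set.indicator_le_indicator_of_subset ?_ (fun _ => zero_le) x
      exact fun z hz => ⟨hz.1, hz.2.trans (by exact_mod_cast Nat.cast_le.mpr hij)⟩
  rw [hsup]
  exact iSup_le hmain

theorem ae_tendsto_of_fast_l1 {N : ℕ}
    {w : ℕ → EuclideanSpace ℝ (Fin N) → EuclideanSpace ℝ (Fin N)}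
    {v : EuclideanSpace ℝ (Fin N) → EuclideanSpace ℝ (Fin N)}
    (hwm : ∀ k, Measurable (w k)) (hvm : Measurable v)
    (hint : ∀ k : ℕ, IntegrableOn (fun x => w k x - v x)
      (Metric.closedBall 0 ((k:ℝ)+1)) volume)
    (hfast : ∀ k : ℕ, ∫ x in Metric.closedBall 0 ((k:ℝ)+1), ‖w k x - v x‖ ≤ (2:ℝ)⁻¹ ^ k) :
    ∀ᵐ x, Tendsto (fun k => w k x) atTop (𝓝 (v x)) := by
  set g : ℕ → EuclideanSpace ℝ (Fin N) → ℝ≥0∞ :=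
    fun k x => (‖w k x - v x‖₊ : ℝ≥0∞) with hg
  have hgm : ∀ k, Measurable (g k) := fun k => ((hwm k).sub hvm).nnnorm.coe_nnreal_ennreal
  have hgb : ∀ k : ℕ, ∫⁻ x in Metric.closedBall 0 ((k:ℝ)+1), g k x
      ≤ ENNReal.ofReal ((2:ℝ)⁻¹ ^ k) := by
    intro k
    refine (ofReal_integral_norm_eq_lintegral_enorm (hint k)).symm.le.trans ?_
    exact ENNReal.ofReal_le_ofReal (hfast k)
  have hAn : ∀ n : ℕ, ∀ᵐ x ∂(volume.restrict (Metric.closedBall 0 ((n:ℝ)+1))),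
      Tendsto (fun k => w k x) atTop (𝓝 (v x)) := by
    intro n
    have hfin : ∫⁻ x in Metric.closedBall 0 ((n:ℝ)+1), ∑' i, g (i + n) x < ∞ := by
      rw [lintegral_tsum (fun i => ((hgm (i + n)).aemeasurable))]
      have hterm : ∀ i : ℕ, ∫⁻ x in Metric.closedBall 0 ((n:ℝ)+1), g (i + n) x
          ≤ ENNReal.ofReal (2:ℝ)⁻¹ ^ (i+n) := by
        intro i
        have hsub : Metric.closedBall (0 : EuclideanSpace ℝ (Fin N)) ((n:ℝ)+1)
            ⊆ Metric.closedBall 0 (((i+n : ℕ):ℝ)+1) := by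
          apply Metric.closedBall_subset_closedBall
          push_cast; linarith [Nat.cast_nonneg (α := ℝ) i]
        refine le_trans (lintegral_mono_set hsub) ?_
        refine le_trans (hgb (i+n)) ?_
        rw [ENNReal.ofReal_pow (by norm_num)]
      calc ∑' i, ∫⁻ x in Metric.closedBall 0 ((n:ℝ)+1), g (i + n) x
          ≤ ∑' i, ENNReal.ofReal (2:ℝ)⁻¹ ^ (i+n) := ENNReal.tsum_le_tsum hterm
        _ ≤ ∑' i, ENNReal.ofReal (2:ℝ)⁻¹ ^ i := by
            refine ENNReal.tsum_le_tsum fun i => ?_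
            exact pow_le_pow_of_le_one zero_le (by
              simpa using ENNReal.ofReal_lt_one.mpr (by norm_num : (2:ℝ)⁻¹ < 1) |>.le)
              (Nat.le_add_right i n)
        _ = (1 - ENNReal.ofReal (2:ℝ)⁻¹)⁻¹ := ENNReal.tsum_geometric _
        _ < ∞ := by
            rw [ENNReal.inv_lt_top, tsub_pos_iff_lt]
            exact ENNReal.ofReal_lt_one.mpr (by norm_num : (2:ℝ)⁻¹ < 1)
    have hae := ae_lt_top (Measurable.ennreal_tsum fun i => hgm (i + n)) hfin.ne
    filter_upwards [hae] with x hx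
    have h0 : Tendsto (fun i => g (i + n) x) atTop (𝓝 0) :=
      ENNReal.tendsto_atTop_zero_of_tsum_ne_top hx.ne
    have h1 : Tendsto (fun k => g k x) atTop (𝓝 0) :=
      (tendsto_add_atTop_iff_nat n).mp h0
    rw [tendsto_iff_norm_sub_tendsto_zero]
    have h2 : Tendsto (fun k => (g k x).toReal) atTop (𝓝 (0:ℝ≥0∞).toReal) :=
      (ENNReal.tendsto_toReal (by simp)).comp h1
    simpa [hg] using h2
  have hcov : ∀ᵐ x : EuclideanSpace ℝ (Fin N), ∀ n : ℕ,
      x ∈ Metric.closedBall (0:EuclideanSpace ℝ (Fin N)) ((n:ℝ)+1) →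
      Tendsto (fun k => w k x) atTop (𝓝 (v x)) :=
    ae_all_iff.mpr fun n => ae_imp_of_ae_restrict (hAn n)
  filter_upwards [hcov] with x hx
  obtain ⟨n, hn⟩ := exists_nat_ge ‖x‖
  exact hx n (mem_closedBall_zero_iff.mpr (hn.trans (by linarith)))

theorem sq_liminf_le {a : ℕ → ℝ≥0∞} :
    (liminf a atTop) ^ 2 ≤ liminf (fun k => (a k) ^ 2) atTop := by
  have hmono : Monotone (fun x : ℝ≥0∞ => x ^ 2) := fun x y h => pow_le_pow_left' h 2
  have h := hmono.map_liminf_of_continuousAt (F := atTop) a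
    ((ENNReal.continuous_pow 2).continuousAt)
  exact le_of_eq h

theorem energy_fatou {N : ℕ} {α p : ℝ}
    {w : ℕ → EuclideanSpace ℝ (Fin N) → EuclideanSpace ℝ (Fin N)}
    {v : EuclideanSpace ℝ (Fin N) → EuclideanSpace ℝ (Fin N)}
    (hwm : ∀ k, Measurable (w k)) (hvm : Measurable v)
    (hconv : ∀ᵐ y, Tendsto (fun k => w k y) atTop (𝓝 (v y))) :
    coulombEnergy N α p v ≤ liminf (fun k => coulombEnergy N α p (w k)) atTop := by
  set K : EuclideanSpace ℝ (Fin N) → ℝ≥0∞ :=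
    fun z => ENNReal.ofReal (rieszKernel N (α/2) z) with hK
  have hKm : Measurable K := by
    apply Measurable.ennreal_ofReal
    exact measurable_const.mul (measurable_norm.pow_const _)
  have hKtop : ∀ z, K z ≠ ∞ := fun z => ENNReal.ofReal_ne_top
  set Φ : (EuclideanSpace ℝ (Fin N) → EuclideanSpace ℝ (Fin N)) →
      EuclideanSpace ℝ (Fin N) → ℝ≥0∞ :=
    fun f x => ∫⁻ y, K (x - y) * (‖f y‖₊ : ℝ≥0∞) ^ p with hΦ
  have hΦm : ∀ f : EuclideanSpace ℝ (Fin N) → EuclideanSpace ℝ (Fin N),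
      Measurable f → Measurable (Φ f) := by
    intro f hf
    apply Measurable.lintegral_prod_right'
      (f := fun q : EuclideanSpace ℝ (Fin N) × EuclideanSpace ℝ (Fin N) =>
        K (q.1 - q.2) * (‖f q.2‖₊ : ℝ≥0∞) ^ p)
    exact (hKm.comp (measurable_fst.sub measurable_snd)).mul
      (((hf.comp measurable_snd).nnnorm.coe_nnreal_ennreal).pow_const p)
  have haep : ∀ᵐ y, Tendsto (fun k => (‖w k y‖₊ : ℝ≥0∞) ^ p) atTop
      (𝓝 ((‖v y‖₊ : ℝ≥0∞) ^ p)) := by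
    filter_upwards [hconv] with y hy
    have h1 : Tendsto (fun k => (‖w k y‖₊ : ℝ≥0∞)) atTop (𝓝 (‖v y‖₊ : ℝ≥0∞)) :=
      (ENNReal.continuous_coe.tendsto _).comp ((continuous_nnnorm.tendsto _).comp hy)
    exact (ENNReal.continuous_rpow_const.tendsto _).comp h1
  have hpt : ∀ x, Φ v x ≤ liminf (fun k => Φ (w k) x) atTop := by
    intro x
    have heq : Φ v x = ∫⁻ y, liminf (fun k => K (x - y) * (‖w k y‖₊ : ℝ≥0∞) ^ p) atTop := by
      refine lintegral_congr_ae ?_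
      filter_upwards [haep] with y hy
      have ht : Tendsto (fun k => K (x - y) * (‖w k y‖₊ : ℝ≥0∞) ^ p) atTop
          (𝓝 (K (x - y) * (‖v y‖₊ : ℝ≥0∞) ^ p)) :=
        ENNReal.Tendsto.const_mul hy (Or.inr (hKtop _))
      exact ht.liminf_eq.symm
    rw [heq]
    exact lintegral_liminf_le' fun k =>
      ((hKm.comp (measurable_const.sub measurable_id)).mul
        (((hwm k).nnnorm.coe_nnreal_ennreal).pow_const p)).aemeasurable
  have hmain : ∀ x, (Φ v x) ^ 2 ≤ liminf (fun k => (Φ (w k) x) ^ 2) atTop := fun x =>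
    (pow_le_pow_left' (hpt x) 2).trans sq_liminf_le
  calc coulombEnergy N α p v = ∫⁻ x, (Φ v x) ^ 2 := rfl
    _ ≤ ∫⁻ x, liminf (fun k => (Φ (w k) x) ^ 2) atTop := lintegral_mono hmain
    _ ≤ liminf (fun k => ∫⁻ x, (Φ (w k) x) ^ 2) atTop :=
        lintegral_liminf_le' fun k => ((hΦm _ (hwm k)).pow_const 2).aemeasurable
    _ = liminf (fun k => coulombEnergy N α p (w k)) atTop := rfl

/-- Fatou property of the Coulomb energy: if `(u_n)` is bounded in `Q^{α,p}` and
`u_n → u` in `L¹_loc`, then `u ∈ Q^{α,p}` and the Coulomb energy of `u` is at most the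
liminf of the Coulomb energies of the `u_n`. -/
theorem stmt6 (N : ℕ) (hN : 1 ≤ N) (α p : ℝ) (hα : 0 < α) (hαN : α < N) (hp : 1 ≤ p)
    (u : ℕ → EuclideanSpace ℝ (Fin N) → EuclideanSpace ℝ (Fin N))
    (v : EuclideanSpace ℝ (Fin N) → EuclideanSpace ℝ (Fin N))
    (humeas : ∀ n, AEMeasurable (u n)) (hvmeas : AEMeasurable v)
    (hbdd : ∃ C : ℝ≥0∞, C ≠ ∞ ∧ ∀ n, coulombEnergy N α p (u n) ≤ C)
    (hloc : ∀ K : Set (EuclideanSpace ℝ (Fin N)), IsCompact K →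
        Filter.Tendsto (fun n => ∫ x in K, ‖u n x - v x‖) Filter.atTop (nhds 0)) :
    coulombEnergy N α p v ≠ ∞ ∧
      coulombEnergy N α p v ≤
        Filter.liminf (fun n => coulombEnergy N α p (u n)) Filter.atTop := by
  obtain ⟨C, hC, hbC⟩ := hbdd
  set u' : ℕ → EuclideanSpace ℝ (Fin N) → EuclideanSpace ℝ (Fin N) :=
    fun n => (humeas n).mk (u n) with hu'
  set v' := hvmeas.mk v with hv'
  have hu'm : ∀ n, Measurable (u' n) := fun n => (humeas n).measurable_mk
  have hv'm : Measurable v' := hvmeas.measurable_mk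
  have hueq : ∀ n, u n =ᵐ[volume] u' n := fun n => (humeas n).ae_eq_mk
  have hveq : v =ᵐ[volume] v' := hvmeas.ae_eq_mk
  have hEu : ∀ n, coulombEnergy N α p (u' n) = coulombEnergy N α p (u n) := fun n =>
    (coulombEnergy_congr (hueq n)).symm
  have hEv : coulombEnergy N α p v = coulombEnergy N α p v' := coulombEnergy_congr hveq
  have hbC' : ∀ n, coulombEnergy N α p (u' n) ≤ C := fun n => (hEu n).le.trans (hbC n)
  have hloc' : ∀ K : Set (EuclideanSpace ℝ (Fin N)), IsCompact K →
      Tendsto (fun n => ∫ x in K, ‖u' n x - v' x‖) atTop (𝓝 0) := by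
    intro K hK
    have heqi : ∀ n, ∫ x in K, ‖u' n x - v' x‖ = ∫ x in K, ‖u n x - v x‖ := by
      intro n
      refine integral_congr_ae (ae_restrict_of_ae ?_)
      filter_upwards [hueq n, hveq] with x h1 h2
      rw [h1, h2]
    simpa only [heqi] using hloc K hK
  have hInt_u : ∀ (n : ℕ) (r : ℝ), 0 < r →
      IntegrableOn (u' n) (Metric.closedBall 0 r) volume := by
    intro n r hr
    obtain ⟨M, hM, hMw⟩ := local_l1_bound hN hα hαN hp hC hr
    exact integrableOn_of_lintegral_bound (hu'm n) hM (hMw _ (hbC' n))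
  have hInt_v : ∀ r : ℝ, 0 < r → IntegrableOn v' (Metric.closedBall 0 r) volume := by
    intro r hr
    obtain ⟨M, hM, hMw⟩ := local_l1_bound hN hα hαN hp hC hr
    refine integrableOn_of_lintegral_bound hv'm (M := M + 1)
      (ENNReal.add_ne_top.mpr ⟨hM, one_ne_top⟩) ?_
    exact v_local_lintegral_bound hu'm hv'm hM (fun n => hMw _ (hbC' n)) hloc'
  set L := Filter.liminf (fun n => coulombEnergy N α p (u n)) Filter.atTop with hL
  have hLC : L ≤ C := liminf_le_of_frequently_le' (Frequently.of_forall hbC)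
  have main : coulombEnergy N α p v ≤ L := by
    rw [hEv]
    apply ENNReal.le_of_forall_pos_le_add
    intro ε hε hLtop
    have hfreq : ∃ᶠ n in atTop, coulombEnergy N α p (u n) < L + ε := by
      exact frequently_lt_of_liminf_lt (by isBoundedDefault)
        (ENNReal.lt_add_right hLtop.ne (ENNReal.coe_ne_zero.mpr hε.ne'))
    obtain ⟨φ₁, hφ₁mono, hφ₁⟩ := extraction_of_frequently_atTop hfreq
    have hP : ∀ n : ℕ, ∀ᶠ k in atTop,
        ∫ x in Metric.closedBall 0 ((n:ℝ)+1), ‖u' (φ₁ k) x - v' x‖ ≤ (2:ℝ)⁻¹ ^ n := by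
      intro n
      have ht : Tendsto (fun k => ∫ x in Metric.closedBall 0 ((n:ℝ)+1), ‖u' (φ₁ k) x - v' x‖)
          atTop (𝓝 0) :=
        (hloc' _ (isCompact_closedBall _ _)).comp hφ₁mono.tendsto_atTop
      exact ht.eventually (eventually_le_nhds (by positivity))
    obtain ⟨φ₂, hφ₂mono, hφ₂⟩ := extraction_forall_of_eventually hP
    set σ : ℕ → ℕ := fun k => φ₁ (φ₂ k) with hσ
    have hconv : ∀ᵐ x, Tendsto (fun k => u' (σ k) x) atTop (𝓝 (v' x)) := by
      refine ae_tendsto_of_fast_l1 (fun k => hu'm (σ k)) hv'm ?_ ?_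
      · intro k
        exact ((hInt_u (σ k) _ (by positivity)).sub (hInt_v _ (by positivity)))
      · exact fun k => hφ₂ k
    have hfatou := energy_fatou (α := α) (p := p) (fun k => hu'm (σ k)) hv'm hconv
    refine hfatou.trans ?_
    apply liminf_le_of_frequently_le'
    apply Frequently.of_forall
    intro k
    rw [hEu]
    exact (hφ₁ (φ₂ k)).le
  exact ⟨(((main.trans hLC).trans_lt hC.lt_top)).ne, main⟩
end

section
/- Let α, β ∈ (0, N) with α + β < N. Then the Riesz kernels satisfy the semigroup property I_{α+β} = I_α ∗ I_β, where I_γ(x) = Γ((N−γ)/2) / (Γ(γ/2) π^{N/2} 2^γ) · |x|^{−(N−γ)}. -/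
open MeasureTheory

open Set Real
open scoped ENNReal

namespace RieszAux

lemma integrableOn_gamma {c r : ℝ} (hc : 0 < c) (hr : 0 < r) :
    IntegrableOn (fun t : ℝ => t ^ (c - 1) * Real.exp (-(r * t))) (Ioi 0) := by
  have h0 := Real.GammaIntegral_convergent hc
  have h1 : IntegrableOn (fun t : ℝ => Real.exp (-(r * t)) * (r * t) ^ (c - 1)) (Ioi 0) := by
    have := (integrableOn_Ioi_comp_mul_left_iff
      (fun x : ℝ => Real.exp (-x) * x ^ (c - 1)) 0 hr).2 (by simpa using h0)
    simpa using this
  have h2 := h1.const_mul (r ^ (1 - c))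
  refine IntegrableOn.congr_fun h2 (fun t ht => ?_) measurableSet_Ioi
  have ht' : (0:ℝ) < t := ht
  rw [Real.mul_rpow hr.le ht'.le]
  have : r ^ (1 - c) * r ^ (c - 1) = 1 := by
    rw [← Real.rpow_add hr]; norm_num
  calc r ^ (1 - c) * (rexp (-(r * t)) * (r ^ (c - 1) * t ^ (c - 1)))
      = (r ^ (1 - c) * r ^ (c - 1)) * (t ^ (c - 1) * rexp (-(r * t))) := by ring
    _ = t ^ (c - 1) * rexp (-(r * t)) := by rw [this, one_mul]

lemma lint_gamma {c r : ℝ} (hc : 0 < c) (hr : 0 < r) :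
    ∫⁻ t in Ioi (0:ℝ), ENNReal.ofReal (t ^ (c - 1) * Real.exp (-(r * t))) =
      ENNReal.ofReal ((1 / r) ^ c * Real.Gamma c) := by
  rw [← Real.integral_rpow_mul_exp_neg_mul_Ioi hc hr,
    ← ofReal_integral_eq_lintegral_ofReal (integrableOn_gamma hc hr)]
  filter_upwards [ae_restrict_mem measurableSet_Ioi] with t ht
  have ht' : (0:ℝ) < t := ht
  positivity


lemma lint_scale {k : ℝ} (hk : 0 < k) (f : ℝ → ℝ≥0∞) (hf : Measurable f) :
    ∫⁻ s in Ioi (0:ℝ), f s = ENNReal.ofReal k * ∫⁻ u in Ioi (0:ℝ), f (k * u) := by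
  have hmap : (volume.restrict (Ioi (0:ℝ))).map (fun u => k * u) =
      ENNReal.ofReal k⁻¹ • volume.restrict (Ioi (0:ℝ)) := by
    have h1 : ((volume : Measure ℝ).map (fun u => k * u)).restrict (Ioi 0) =
        ((volume : Measure ℝ).restrict ((fun u => k * u) ⁻¹' Ioi 0)).map (fun u => k * u) :=
      Measure.restrict_map (measurable_const_mul k) measurableSet_Ioi
    rw [preimage_const_mul_Ioi₀ _ hk] at h1
    simp only [zero_div] at h1
    rw [← h1, Real.map_volume_mul_left hk.ne', abs_inv, abs_of_pos hk,
      Measure.restrict_smul]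
  have h2 : ∫⁻ u in Ioi (0:ℝ), f (k * u) =
      ∫⁻ s, f s ∂((volume.restrict (Ioi (0:ℝ))).map (fun u => k * u)) := by
    rw [lintegral_map hf (measurable_const_mul k)]
  rw [h2, hmap, lintegral_smul_measure, smul_eq_mul, ← mul_assoc, ← ENNReal.ofReal_mul hk.le,
    mul_inv_cancel₀ hk.ne', ENNReal.ofReal_one, one_mul]


variable {N : ℕ}

lemma integrable_gauss {b : ℝ} (hb : 0 < b) :
    Integrable (fun y : EuclideanSpace ℝ (Fin N) => Real.exp (-(b * ‖y‖ ^ 2))) := by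
  have h := (GaussianFourier.integrable_cexp_neg_mul_sq_norm_add (V := EuclideanSpace ℝ (Fin N))
    (b := (b : ℂ)) (by simpa using hb) 0 0).norm
  refine h.congr (ae_of_all _ fun y => ?_)
  simp only [Complex.norm_exp]
  norm_num
  left
  norm_cast

lemma lint_gauss_center {b : ℝ} (hb : 0 < b) :
    ∫⁻ y : EuclideanSpace ℝ (Fin N), ENNReal.ofReal (Real.exp (-(b * ‖y‖ ^ 2))) =
      ENNReal.ofReal ((π / b) ^ ((N : ℝ) / 2)) := by
  rw [← ofReal_integral_eq_lintegral_ofReal (integrable_gauss hb)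
    (ae_of_all _ fun y => (Real.exp_pos _).le)]
  congr 1
  have h := GaussianFourier.integral_rexp_neg_mul_sq_norm (V := EuclideanSpace ℝ (Fin N)) hb
  simp_rw [neg_mul] at h
  rw [h, finrank_euclideanSpace_fin]

lemma lint_gauss_shift {b : ℝ} (hb : 0 < b) (w : EuclideanSpace ℝ (Fin N)) :
    ∫⁻ y : EuclideanSpace ℝ (Fin N), ENNReal.ofReal (Real.exp (-(b * ‖y - w‖ ^ 2))) =
      ENNReal.ofReal ((π / b) ^ ((N : ℝ) / 2)) := by
  rw [← lint_gauss_center hb]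
  exact lintegral_sub_right_eq_self
    (fun y : EuclideanSpace ℝ (Fin N) => ENNReal.ofReal (Real.exp (-(b * ‖y‖ ^ 2)))) w

lemma sq_decomp (x y : EuclideanSpace ℝ (Fin N)) {t s : ℝ} (ht : 0 < t) (hs : 0 < s) :
    t * ‖x - y‖ ^ 2 + s * ‖y‖ ^ 2 =
      (t + s) * ‖y - (t / (t + s)) • x‖ ^ 2 + t * s / (t + s) * ‖x‖ ^ 2 := by
  have hts : t + s ≠ 0 := by positivity
  have h1 : ‖x - y‖ ^ 2 = ‖x‖ ^ 2 - 2 * inner ℝ x y + ‖y‖ ^ 2 :=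
    norm_sub_sq_real x y
  have h2 : ‖y - (t / (t + s)) • x‖ ^ 2 =
      ‖y‖ ^ 2 - 2 * (t / (t + s)) * inner ℝ x y + (t / (t + s)) ^ 2 * ‖x‖ ^ 2 := by
    rw [norm_sub_sq_real, real_inner_smul_right, norm_smul]
    rw [Real.norm_eq_abs, abs_of_pos (by positivity), real_inner_comm]
    ring
  rw [h1, h2]
  field_simp
  ring


lemma lint_gauss_conv (x : EuclideanSpace ℝ (Fin N)) {t s : ℝ} (ht : 0 < t) (hs : 0 < s) :
    ∫⁻ y : EuclideanSpace ℝ (Fin N), ENNReal.ofReal (Real.exp (-(t * ‖x - y‖ ^ 2 + s * ‖y‖ ^ 2))) =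
      ENNReal.ofReal ((π / (t + s)) ^ ((N : ℝ) / 2) * Real.exp (-(t * s / (t + s) * ‖x‖ ^ 2))) := by
  have hts : 0 < t + s := by positivity
  have key : ∀ y : EuclideanSpace ℝ (Fin N),
      Real.exp (-(t * ‖x - y‖ ^ 2 + s * ‖y‖ ^ 2)) =
      Real.exp (-((t + s) * ‖y - (t / (t + s)) • x‖ ^ 2)) *
        Real.exp (-(t * s / (t + s) * ‖x‖ ^ 2)) := by
    intro y
    rw [← Real.exp_add, ← neg_add, sq_decomp x y ht hs]
  simp_rw [key]
  simp_rw [ENNReal.ofReal_mul (Real.exp_pos _).le]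
  rw [lintegral_mul_const' _ _ ENNReal.ofReal_ne_top, lint_gauss_shift hts,
    ← ENNReal.ofReal_mul (by positivity)]


lemma meas_beta_inner {p q : ℝ} : Measurable (fun z : ℝ × ℝ =>
    ENNReal.ofReal (z.1 ^ (p - 1) * (z.2 ^ (p + q - 1) * Real.exp (-((1 + z.1) * z.2))))) := by
  apply Measurable.ennreal_ofReal
  fun_prop

lemma lint_beta {p q : ℝ} (hp : 0 < p) (hq : 0 < q) :
    ∫⁻ u in Ioi (0:ℝ), ENNReal.ofReal (u ^ (p - 1) * (1 + u) ^ (-(p + q))) =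
      ENNReal.ofReal (Real.Gamma p * Real.Gamma q / Real.Gamma (p + q)) := by
  have hpq : 0 < p + q := by positivity
  have key : ENNReal.ofReal (Real.Gamma (p + q)) *
      ∫⁻ u in Ioi (0:ℝ), ENNReal.ofReal (u ^ (p - 1) * (1 + u) ^ (-(p + q))) =
      ENNReal.ofReal (Real.Gamma p * Real.Gamma q) := by
    rw [← lintegral_const_mul' _ _ ENNReal.ofReal_ne_top]
    have step1 : ∀ u ∈ Ioi (0:ℝ),
        ENNReal.ofReal (Real.Gamma (p + q)) * ENNReal.ofReal (u ^ (p - 1) * (1 + u) ^ (-(p + q))) =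
        ∫⁻ w in Ioi (0:ℝ),
          ENNReal.ofReal (u ^ (p - 1) * (w ^ (p + q - 1) * Real.exp (-((1 + u) * w)))) := by
      intro u hu
      have hu' : (0:ℝ) < u := hu
      have h1u : (0:ℝ) < 1 + u := by positivity
      have hg := lint_gamma hpq h1u
      have hrw : (1 / (1 + u)) ^ (p + q) * Real.Gamma (p + q) =
          (1 + u) ^ (-(p + q)) * Real.Gamma (p + q) := by
        rw [one_div, Real.inv_rpow h1u.le, ← Real.rpow_neg h1u.le]
      rw [hrw] at hg
      calc ENNReal.ofReal (Real.Gamma (p + q)) * ENNReal.ofReal (u ^ (p - 1) * (1 + u) ^ (-(p + q)))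
          = ENNReal.ofReal (u ^ (p - 1)) *
            ENNReal.ofReal ((1 + u) ^ (-(p + q)) * Real.Gamma (p + q)) := by
            rw [← ENNReal.ofReal_mul (by positivity), ← ENNReal.ofReal_mul (by positivity)]
            congr 1
            ring
        _ = ENNReal.ofReal (u ^ (p - 1)) *
            ∫⁻ w in Ioi (0:ℝ), ENNReal.ofReal (w ^ (p + q - 1) * Real.exp (-((1 + u) * w))) := by
            rw [← hg]
        _ = _ := by
            rw [← lintegral_const_mul' _ _ ENNReal.ofReal_ne_top]
            congr 1
            ext w
            rw [← ENNReal.ofReal_mul (by positivity)]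
    rw [setLIntegral_congr_fun_ae measurableSet_Ioi (ae_of_all _ step1)]
    rw [lintegral_lintegral_swap (meas_beta_inner.aemeasurable)]
    have step2 : ∀ w ∈ Ioi (0:ℝ),
        (∫⁻ u in Ioi (0:ℝ),
          ENNReal.ofReal (u ^ (p - 1) * (w ^ (p + q - 1) * Real.exp (-((1 + u) * w))))) =
        ENNReal.ofReal (Real.Gamma p * (w ^ (q - 1) * Real.exp (-(1 * w)))) := by
      intro w hw
      have hw' : (0:ℝ) < w := hw
      have hc : ∀ u : ℝ, u ^ (p - 1) * (w ^ (p + q - 1) * Real.exp (-((1 + u) * w))) =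
          (w ^ (p + q - 1) * Real.exp (-w)) * (u ^ (p - 1) * Real.exp (-(w * u))) := by
        intro u
        have : (1 + u) * w = w + w * u := by ring
        rw [this, neg_add, Real.exp_add]
        ring
      simp_rw [hc]
      simp_rw [ENNReal.ofReal_mul (by positivity :
        (0:ℝ) ≤ w ^ (p + q - 1) * Real.exp (-w))]
      rw [lintegral_const_mul' _ _ ENNReal.ofReal_ne_top, lint_gamma hp hw',
        ← ENNReal.ofReal_mul (by positivity)]
      congr 1
      rw [one_div, Real.inv_rpow hw'.le, ← Real.rpow_neg hw'.le]
      have : w ^ (p + q - 1) * Real.exp (-w) * (w ^ (-p) * Real.Gamma p) =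
          Real.Gamma p * (w ^ (p + q - 1) * w ^ (-p) * Real.exp (-w)) := by ring
      rw [this, ← Real.rpow_add hw', one_mul]
      congr 2
      ring
    rw [setLIntegral_congr_fun_ae measurableSet_Ioi (ae_of_all _ step2)]
    simp_rw [ENNReal.ofReal_mul (Real.Gamma_nonneg_of_nonneg hp.le)]
    rw [lintegral_const_mul' _ _ ENNReal.ofReal_ne_top, lint_gamma hq one_pos,
      ← ENNReal.ofReal_mul (Real.Gamma_nonneg_of_nonneg hp.le)]
    norm_num
    rw [ENNReal.ofReal_mul (Real.Gamma_nonneg_of_nonneg hp.le)]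
  have hG : (0:ℝ) < Real.Gamma (p + q) := Real.Gamma_pos_of_pos hpq
  have := key
  rw [← ENNReal.eq_div_iff ((ENNReal.ofReal_pos.2 hG).ne') ENNReal.ofReal_ne_top] at this
  rw [this, ← ENNReal.ofReal_div_of_pos hG]


lemma lint_D {m a b σ : ℝ} (N : ℕ) (hm : 0 < m) (ha : 0 < a) (hb : 0 < b) (hσ : 0 < σ)
    (hσdef : σ = a + b - (N : ℝ) / 2) (hpa : σ < a) (hpb : σ < b) :
    ∫⁻ t in Ioi (0:ℝ), ∫⁻ s in Ioi (0:ℝ),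
        ENNReal.ofReal (t ^ (a - 1) *
          (s ^ (b - 1) * ((π / (t + s)) ^ ((N : ℝ) / 2) * Real.exp (-(t * s / (t + s) * m))))) =
      ENNReal.ofReal (π ^ ((N : ℝ) / 2) * Real.Gamma σ * m ^ (-σ) *
        (Real.Gamma (b - σ) * Real.Gamma (a - σ) / Real.Gamma (b - σ + (a - σ)))) := by
  -- Step 1: for fixed t, substitute s = t * u in the inner integral.
  have step1 : ∀ t ∈ Ioi (0:ℝ),
      (∫⁻ s in Ioi (0:ℝ), ENNReal.ofReal (t ^ (a - 1) *
          (s ^ (b - 1) * ((π / (t + s)) ^ ((N : ℝ) / 2) * Real.exp (-(t * s / (t + s) * m)))))) =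
      ∫⁻ u in Ioi (0:ℝ), ENNReal.ofReal (π ^ ((N : ℝ) / 2) *
        (u ^ (b - 1) * (1 + u) ^ (-((N : ℝ) / 2)) *
          (t ^ (σ - 1) * Real.exp (-(m * u / (1 + u) * t))))) := by
    intro t ht
    have ht' : (0:ℝ) < t := ht
    rw [lint_scale ht' _ (by apply Measurable.ennreal_ofReal; fun_prop)]
    rw [← lintegral_const_mul' _ _ ENNReal.ofReal_ne_top]
    refine setLIntegral_congr_fun_ae measurableSet_Ioi (ae_of_all _ fun u hu => ?_)
    have hu' : (0:ℝ) < u := hu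
    have h1u : (0:ℝ) < 1 + u := by positivity
    rw [← ENNReal.ofReal_mul ht'.le]
    congr 1
    have e1 : t + t * u = t * (1 + u) := by ring
    have e2 : (t * u) ^ (b - 1) = t ^ (b - 1) * u ^ (b - 1) :=
      Real.mul_rpow ht'.le hu'.le
    have e3 : (π / (t * (1 + u))) ^ ((N : ℝ) / 2) =
        π ^ ((N : ℝ) / 2) * t ^ (-((N : ℝ) / 2)) * (1 + u) ^ (-((N : ℝ) / 2)) := by
      rw [Real.div_rpow Real.pi_pos.le (by positivity), Real.mul_rpow ht'.le h1u.le,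
        Real.rpow_neg ht'.le, Real.rpow_neg h1u.le]
      field_simp
    have e4 : t * (t * u) / (t * (1 + u)) * m = m * u / (1 + u) * t := by
      field_simp
    rw [e1, e2, e3, e4]
    have e5 : t * (t ^ (a - 1) * (t ^ (b - 1) * u ^ (b - 1) *
        (π ^ ((N : ℝ) / 2) * t ^ (-((N : ℝ) / 2)) * (1 + u) ^ (-((N : ℝ) / 2)) *
          Real.exp (-(m * u / (1 + u) * t))))) =
        (t * t ^ (a - 1) * t ^ (b - 1) * t ^ (-((N : ℝ) / 2))) *
        (π ^ ((N : ℝ) / 2) * (u ^ (b - 1) * (1 + u) ^ (-((N : ℝ) / 2)) *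
          Real.exp (-(m * u / (1 + u) * t)))) := by ring
    rw [e5]
    have e6 : t * t ^ (a - 1) * t ^ (b - 1) * t ^ (-((N : ℝ) / 2)) = t ^ (σ - 1) := by
      nth_rewrite 1 [← Real.rpow_one t]
      rw [← Real.rpow_add ht', ← Real.rpow_add ht', ← Real.rpow_add ht']
      congr 1
      rw [hσdef]; ring
    rw [e6]
    ring
  rw [setLIntegral_congr_fun_ae measurableSet_Ioi (ae_of_all _ step1)]
  -- Step 2: swap t and u.
  rw [lintegral_lintegral_swap (by apply (Measurable.ennreal_ofReal ?_).aemeasurable; fun_prop)]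
  -- Step 3: inner t-integral is a Gamma integral.
  have step3 : ∀ u ∈ Ioi (0:ℝ),
      (∫⁻ t in Ioi (0:ℝ), ENNReal.ofReal (π ^ ((N : ℝ) / 2) *
        (u ^ (b - 1) * (1 + u) ^ (-((N : ℝ) / 2)) *
          (t ^ (σ - 1) * Real.exp (-(m * u / (1 + u) * t)))))) =
      ENNReal.ofReal ((π ^ ((N : ℝ) / 2) * Real.Gamma σ * m ^ (-σ)) *
        (u ^ (b - σ - 1) * (1 + u) ^ (-(b - σ + (a - σ))))) := by
    intro u hu
    have hu' : (0:ℝ) < u := hu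
    have h1u : (0:ℝ) < 1 + u := by positivity
    have hr : (0:ℝ) < m * u / (1 + u) := by positivity
    have comb : ∀ t : ℝ, π ^ ((N : ℝ) / 2) *
        (u ^ (b - 1) * (1 + u) ^ (-((N : ℝ) / 2)) *
          (t ^ (σ - 1) * Real.exp (-(m * u / (1 + u) * t)))) =
        (π ^ ((N : ℝ) / 2) * (u ^ (b - 1) * (1 + u) ^ (-((N : ℝ) / 2)))) *
          (t ^ (σ - 1) * Real.exp (-(m * u / (1 + u) * t))) := by intro t; ring
    simp_rw [comb, ENNReal.ofReal_mul (by positivity :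
      (0:ℝ) ≤ π ^ ((N : ℝ) / 2) * (u ^ (b - 1) * (1 + u) ^ (-((N : ℝ) / 2))))]
    rw [lintegral_const_mul' _ _ ENNReal.ofReal_ne_top, lint_gamma hσ hr,
      ← ENNReal.ofReal_mul (by positivity)]
    congr 1
    have e7 : (1 / (m * u / (1 + u))) ^ σ = m ^ (-σ) * u ^ (-σ) * (1 + u) ^ σ := by
      rw [one_div_div, Real.div_rpow h1u.le (by positivity),
        Real.mul_rpow hm.le hu'.le, Real.rpow_neg hm.le, Real.rpow_neg hu'.le,
        div_eq_mul_inv, mul_inv]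
      ring
    have e8 : u ^ (b - 1) * u ^ (-σ) = u ^ (b - σ - 1) := by
      rw [← Real.rpow_add hu']
      congr 1
      ring
    have e9 : (1 + u) ^ (-((N : ℝ) / 2)) * (1 + u) ^ σ = (1 + u) ^ (-(b - σ + (a - σ))) := by
      rw [← Real.rpow_add h1u]
      congr 1
      linarith
    rw [e7, ← e8, ← e9]
    ring
  rw [setLIntegral_congr_fun_ae measurableSet_Ioi (ae_of_all _ step3)]
  simp_rw [ENNReal.ofReal_mul (by positivity :
    (0:ℝ) ≤ π ^ ((N : ℝ) / 2) * Real.Gamma σ * m ^ (-σ))]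
  rw [lintegral_const_mul' _ _ ENNReal.ofReal_ne_top,
    lint_beta (by linarith : (0:ℝ) < b - σ) (by linarith : (0:ℝ) < a - σ),
    ← ENNReal.ofReal_mul (by positivity)]


lemma rpow_norm_aux {z : EuclideanSpace ℝ (Fin N)} (hz : z ≠ 0) (c : ℝ) :
    (1 / ‖z‖ ^ 2 : ℝ) ^ c = ‖z‖ ^ (-(2 * c)) := by
  have h : (0:ℝ) < ‖z‖ := norm_pos_iff.2 hz
  rw [one_div, ← Real.rpow_natCast ‖z‖ 2, ← Real.rpow_neg h.le, ← Real.rpow_mul h.le]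
  norm_num

lemma lint_J {N : ℕ} (hN : 1 ≤ N) (x : EuclideanSpace ℝ (Fin N)) (hx : x ≠ 0)
    {α β : ℝ} (hα : 0 < α) (hβ : 0 < β) (hαβ : α + β < N) :
    ENNReal.ofReal (Real.Gamma (((N:ℝ) - α) / 2) * Real.Gamma (((N:ℝ) - β) / 2)) *
      ∫⁻ y, ENNReal.ofReal (‖x - y‖ ^ (-((N:ℝ) - α)) * ‖y‖ ^ (-((N:ℝ) - β))) =
    ∫⁻ t in Ioi (0:ℝ), ∫⁻ s in Ioi (0:ℝ),
        ENNReal.ofReal (t ^ (((N:ℝ) - α) / 2 - 1) *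
          (s ^ (((N:ℝ) - β) / 2 - 1) * ((π / (t + s)) ^ ((N : ℝ) / 2) *
            Real.exp (-(t * s / (t + s) * ‖x‖ ^ 2))))) := by
  have : Nonempty (Fin N) := ⟨⟨0, hN⟩⟩
  set a : ℝ := ((N:ℝ) - α) / 2 with ha_def
  set b : ℝ := ((N:ℝ) - β) / 2 with hb_def
  have ha : 0 < a := by
    rw [ha_def]
    have h : α < (N:ℝ) := by linarith
    linarith
  have hb : 0 < b := by
    rw [hb_def]
    have h : β < (N:ℝ) := by linarith
    linarith
  set F : EuclideanSpace ℝ (Fin N) → ℝ → ℝ≥0∞ :=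
    fun y t => ENNReal.ofReal (t ^ (a - 1) * Real.exp (-(‖x - y‖ ^ 2 * t))) with hF_def
  set G : EuclideanSpace ℝ (Fin N) → ℝ → ℝ≥0∞ :=
    fun y s => ENNReal.ofReal (s ^ (b - 1) * Real.exp (-(‖y‖ ^ 2 * s))) with hG_def
  set C : EuclideanSpace ℝ (Fin N) → ℝ≥0∞ := fun y => ∫⁻ s in Ioi (0:ℝ), G y s with hC_def
  have hGm : Measurable (fun p : EuclideanSpace ℝ (Fin N) × ℝ => G p.1 p.2) := by
    apply Measurable.ennreal_ofReal
    fun_prop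
  have hCm : Measurable C := hGm.lintegral_prod_right'
  have hae : ∀ᵐ y : EuclideanSpace ℝ (Fin N), y ≠ x ∧ y ≠ 0 := by
    rw [ae_iff]
    refine measure_mono_null (fun y hy => ?_) (?_ : volume ({x, 0} :
      Set (EuclideanSpace ℝ (Fin N))) = 0)
    · simp only [mem_setOf_eq, not_and_or, not_not] at hy
      simpa using hy
    · refine measure_union_null (measure_singleton x) (measure_singleton 0)
  calc ENNReal.ofReal (Real.Gamma a * Real.Gamma b) *
        ∫⁻ y, ENNReal.ofReal (‖x - y‖ ^ (-((N:ℝ) - α)) * ‖y‖ ^ (-((N:ℝ) - β)))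
      = ∫⁻ y, ENNReal.ofReal (Real.Gamma a * Real.Gamma b) *
          ENNReal.ofReal (‖x - y‖ ^ (-((N:ℝ) - α)) * ‖y‖ ^ (-((N:ℝ) - β))) :=
        (lintegral_const_mul' _ _ ENNReal.ofReal_ne_top).symm
    _ = ∫⁻ y, (∫⁻ t in Ioi (0:ℝ), F y t) * C y := by
        refine lintegral_congr_ae ?_
        filter_upwards [hae] with y hy
        have hxy : x - y ≠ 0 := sub_ne_zero.2 (Ne.symm hy.1)
        have h1 : (0:ℝ) < ‖x - y‖ ^ 2 := pow_pos (norm_pos_iff.2 hxy) 2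
        have h2 : (0:ℝ) < ‖y‖ ^ 2 := pow_pos (norm_pos_iff.2 hy.2) 2
        rw [hC_def, hF_def, hG_def]
        simp only
        rw [lint_gamma ha h1, lint_gamma hb h2,
          ← ENNReal.ofReal_mul (by positivity), ← ENNReal.ofReal_mul (by positivity)]
        congr 1
        rw [rpow_norm_aux hxy, rpow_norm_aux hy.2]
        have e1 : 2 * a = (N:ℝ) - α := by rw [ha_def]; ring
        have e2 : 2 * b = (N:ℝ) - β := by rw [hb_def]; ring
        rw [e1, e2]
        ring
    _ = ∫⁻ y, ∫⁻ t in Ioi (0:ℝ), F y t * C y := by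
        refine lintegral_congr fun y => ?_
        refine (lintegral_mul_const'' _ (Measurable.aemeasurable ?_)).symm
        apply Measurable.ennreal_ofReal
        fun_prop
    _ = ∫⁻ t in Ioi (0:ℝ), ∫⁻ y, F y t * C y := by
        refine lintegral_lintegral_swap ?_
        refine ((Measurable.mul ?_ (hCm.comp measurable_fst)).aemeasurable)
        apply Measurable.ennreal_ofReal
        fun_prop
    _ = ∫⁻ t in Ioi (0:ℝ), ∫⁻ s in Ioi (0:ℝ),
        ENNReal.ofReal (t ^ (a - 1) *
          (s ^ (b - 1) * ((π / (t + s)) ^ ((N : ℝ) / 2) *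
            Real.exp (-(t * s / (t + s) * ‖x‖ ^ 2))))) := by
        refine setLIntegral_congr_fun_ae measurableSet_Ioi (ae_of_all _ fun t ht => ?_)
        have ht' : (0:ℝ) < t := ht
        -- split off the constant t ^ (a-1)
        have split : ∀ y : EuclideanSpace ℝ (Fin N),
            F y t * C y = ENNReal.ofReal (t ^ (a - 1)) *
              (ENNReal.ofReal (Real.exp (-(‖x - y‖ ^ 2 * t))) * C y) := by
          intro y
          rw [hF_def]
          simp only
          rw [ENNReal.ofReal_mul (by positivity), mul_assoc]
        simp_rw [split]
        rw [lintegral_const_mul' _ _ ENNReal.ofReal_ne_top]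
        have inner1 : ∀ y : EuclideanSpace ℝ (Fin N),
            ENNReal.ofReal (Real.exp (-(‖x - y‖ ^ 2 * t))) * C y =
            ∫⁻ s in Ioi (0:ℝ), ENNReal.ofReal (Real.exp (-(‖x - y‖ ^ 2 * t))) * G y s := by
          intro y
          rw [hC_def]
          exact (lintegral_const_mul' _ _ ENNReal.ofReal_ne_top).symm
        simp_rw [inner1]
        rw [lintegral_lintegral_swap (by
          refine Measurable.aemeasurable (Measurable.mul (f := fun p : EuclideanSpace ℝ (Fin N) × ℝ => ENNReal.ofReal (Real.exp (-(‖x - p.1‖ ^ 2 * t)))) (g := fun p => G p.1 p.2) ?_ ?_)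
          · apply Measurable.ennreal_ofReal
            fun_prop
          · apply Measurable.ennreal_ofReal
            fun_prop)]
        have inner2 : ∀ s ∈ Ioi (0:ℝ),
            (∫⁻ y, ENNReal.ofReal (Real.exp (-(‖x - y‖ ^ 2 * t))) * G y s) =
            ENNReal.ofReal (t ^ (a - 1))⁻¹ * ENNReal.ofReal (t ^ (a - 1) *
              (s ^ (b - 1) * ((π / (t + s)) ^ ((N : ℝ) / 2) *
                Real.exp (-(t * s / (t + s) * ‖x‖ ^ 2))))) := by
          intro s hs
          have hs' : (0:ℝ) < s := hs
          have comb : ∀ y : EuclideanSpace ℝ (Fin N),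
              ENNReal.ofReal (Real.exp (-(‖x - y‖ ^ 2 * t))) * G y s =
              ENNReal.ofReal (s ^ (b - 1)) *
                ENNReal.ofReal (Real.exp (-(t * ‖x - y‖ ^ 2 + s * ‖y‖ ^ 2))) := by
            intro y
            rw [hG_def]
            simp only
            rw [ENNReal.ofReal_mul (by positivity), ← mul_assoc,
              mul_comm (ENNReal.ofReal (Real.exp _)), mul_assoc,
              ← ENNReal.ofReal_mul (by positivity)]
            congr 2
            rw [← Real.exp_add, ← neg_add]
            ring_nf
          simp_rw [comb]
          rw [lintegral_const_mul' _ _ ENNReal.ofReal_ne_top, lint_gauss_conv x ht' hs',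
            ← ENNReal.ofReal_mul (by positivity)]
          rw [← ENNReal.ofReal_mul (by positivity)]
          congr 1
          have hta : t ^ (a - 1) ≠ 0 := by positivity
          field_simp
        rw [setLIntegral_congr_fun_ae measurableSet_Ioi (ae_of_all _ inner2)]
        rw [lintegral_const_mul' _ _ ENNReal.ofReal_ne_top, ← mul_assoc,
          ← ENNReal.ofReal_mul (by positivity), mul_inv_cancel₀ (by positivity),
          ENNReal.ofReal_one, one_mul]

end RieszAux

open RieszAux

/-- Semigroup property of the Riesz kernels: `I_α ∗ I_β = I_{α+β}` for
`α, β ∈ (0, N)` with `α + β < N`. -/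
theorem stmt9 (N : ℕ) (hN : 1 ≤ N) (α β : ℝ) (hα : 0 < α) (hβ : 0 < β)
    (hαβ : α + β < N) (x : EuclideanSpace ℝ (Fin N)) (hx : x ≠ 0) :
    ∫ y, rieszKernel N α (x - y) * rieszKernel N β y = rieszKernel N (α + β) x := by
  have hNR : α + β < (N:ℝ) := hαβ
  have ha : 0 < ((N:ℝ) - α) / 2 := by linarith
  have hb : 0 < ((N:ℝ) - β) / 2 := by linarith
  have hσ : 0 < ((N:ℝ) - (α + β)) / 2 := by linarith
  have hpa : ((N:ℝ) - (α + β)) / 2 < ((N:ℝ) - α) / 2 := by linarith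
  have hpb : ((N:ℝ) - (α + β)) / 2 < ((N:ℝ) - β) / 2 := by linarith
  have hm : (0:ℝ) < ‖x‖ ^ 2 := pow_pos (norm_pos_iff.2 hx) 2
  have hP : (0:ℝ) < π ^ ((N:ℝ) / 2) := Real.rpow_pos_of_pos Real.pi_pos _
  have hg1 : (0:ℝ) < Real.Gamma (α / 2) := Real.Gamma_pos_of_pos (by linarith)
  have hg2 : (0:ℝ) < Real.Gamma (β / 2) := Real.Gamma_pos_of_pos (by linarith)
  have hg3 : (0:ℝ) < Real.Gamma ((α + β) / 2) := Real.Gamma_pos_of_pos (by linarith)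
  have hga : (0:ℝ) < Real.Gamma (((N:ℝ) - α) / 2) := Real.Gamma_pos_of_pos ha
  have hgb : (0:ℝ) < Real.Gamma (((N:ℝ) - β) / 2) := Real.Gamma_pos_of_pos hb
  have hgσ : (0:ℝ) < Real.Gamma (((N:ℝ) - (α + β)) / 2) := Real.Gamma_pos_of_pos hσ
  have h2a : (0:ℝ) < (2:ℝ) ^ α := Real.rpow_pos_of_pos two_pos _
  have h2b : (0:ℝ) < (2:ℝ) ^ β := Real.rpow_pos_of_pos two_pos _
  have hD := lint_D (m := ‖x‖ ^ 2) (a := ((N:ℝ) - α) / 2) (b := ((N:ℝ) - β) / 2)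
    (σ := ((N:ℝ) - (α + β)) / 2) N hm ha hb hσ (by ring) hpa hpb
  have hJ := lint_J hN x hx hα hβ hNR
  rw [hD] at hJ
  have e1 : ((N:ℝ) - β) / 2 - ((N:ℝ) - (α + β)) / 2 = α / 2 := by ring
  have e2 : ((N:ℝ) - α) / 2 - ((N:ℝ) - (α + β)) / 2 = β / 2 := by ring
  have e3 : ((N:ℝ) - β) / 2 - ((N:ℝ) - (α + β)) / 2 +
      (((N:ℝ) - α) / 2 - ((N:ℝ) - (α + β)) / 2) = (α + β) / 2 := by ring
  rw [e3, e1, e2] at hJ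
  set W : ℝ := π ^ ((N:ℝ) / 2) * Real.Gamma (((N:ℝ) - (α + β)) / 2) *
      (‖x‖ ^ 2) ^ (-(((N:ℝ) - (α + β)) / 2)) *
      (Real.Gamma (α / 2) * Real.Gamma (β / 2) / Real.Gamma ((α + β) / 2)) with hW_def
  have hWpos : (0:ℝ) < W := by
    rw [hW_def]
    exact mul_pos (mul_pos (mul_pos hP hgσ) (Real.rpow_pos_of_pos hm _))
      (div_pos (mul_pos hg1 hg2) hg3)
  have hGab : (0:ℝ) < Real.Gamma (((N:ℝ) - α) / 2) * Real.Gamma (((N:ℝ) - β) / 2) :=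
    mul_pos hga hgb
  have hL : (∫⁻ y, ENNReal.ofReal (‖x - y‖ ^ (-((N:ℝ) - α)) * ‖y‖ ^ (-((N:ℝ) - β)))) =
      ENNReal.ofReal (W / (Real.Gamma (((N:ℝ) - α) / 2) * Real.Gamma (((N:ℝ) - β) / 2))) := by
    rw [← ENNReal.eq_div_iff ((ENNReal.ofReal_pos.2 hGab).ne') ENNReal.ofReal_ne_top] at hJ
    rw [hJ, ← ENNReal.ofReal_div_of_pos hGab]
  have hBoch : (∫ y, ‖x - y‖ ^ (-((N:ℝ) - α)) * ‖y‖ ^ (-((N:ℝ) - β))) =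
      W / (Real.Gamma (((N:ℝ) - α) / 2) * Real.Gamma (((N:ℝ) - β) / 2)) := by
    rw [integral_eq_lintegral_of_nonneg_ae (ae_of_all _ fun y => by positivity)
      (by apply Measurable.aestronglyMeasurable; fun_prop), hL,
      ENNReal.toReal_ofReal (le_of_lt (div_pos hWpos hGab))]
  calc ∫ y, rieszKernel N α (x - y) * rieszKernel N β y
      = ∫ y, (Real.Gamma (((N:ℝ) - α) / 2) /
            (Real.Gamma (α / 2) * π ^ ((N:ℝ) / 2) * (2:ℝ) ^ α) *
          (Real.Gamma (((N:ℝ) - β) / 2) /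
            (Real.Gamma (β / 2) * π ^ ((N:ℝ) / 2) * (2:ℝ) ^ β))) *
          (‖x - y‖ ^ (-((N:ℝ) - α)) * ‖y‖ ^ (-((N:ℝ) - β))) := by
        congr 1
        funext y
        simp only [rieszKernel]
        ring
    _ = (Real.Gamma (((N:ℝ) - α) / 2) /
            (Real.Gamma (α / 2) * π ^ ((N:ℝ) / 2) * (2:ℝ) ^ α) *
          (Real.Gamma (((N:ℝ) - β) / 2) /
            (Real.Gamma (β / 2) * π ^ ((N:ℝ) / 2) * (2:ℝ) ^ β))) *
          ∫ y, ‖x - y‖ ^ (-((N:ℝ) - α)) * ‖y‖ ^ (-((N:ℝ) - β)) := by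
        rw [integral_const_mul]
    _ = rieszKernel N (α + β) x := by
        rw [hBoch, hW_def, rieszKernel]
        have em : ((‖x‖ ^ 2 : ℝ)) ^ (-(((N:ℝ) - (α + β)) / 2)) =
            ‖x‖ ^ (-((N:ℝ) - (α + β))) := by
          rw [← Real.rpow_natCast ‖x‖ 2, ← Real.rpow_mul (norm_nonneg x)]
          congr 1
          push_cast
          ring
        rw [em]
        have h2ab : (2:ℝ) ^ (α + β) = (2:ℝ) ^ α * (2:ℝ) ^ β :=
          Real.rpow_add two_pos α β
        rw [h2ab]
        field_simp
end
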